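/- arXiv:2006.16073 — 7 statements merged into one kernel-verified Lean document; each statement's English description precedes it below -/
import Mathlib

section
/- Suppose the matrix ∑_{a∈𝒜} w_a a aᵀ is positive definite. Then ψ(μ, w) = min_{a ∈ 𝒜∖{a*_μ}} (μᵀ(a*_μ − a))² / (2 (a*_μ − a)ᵀ (∑_{a'∈𝒜} w_{a'} a' a'ᵀ)⁻¹ (a*_μ − a)). If instead ∑_{a∈𝒜} w_a a aᵀ is not invertible, then ψ(μ, w) = 0. -/
open Matrix

/-- The design matrix `∑_{a ∈ 𝒜} w_a a aᵀ` associated with an allocation `w`. -/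
noncomputable def armMatrix {d : ℕ} (𝒜 : Finset (Fin d → ℝ)) (w : {a // a ∈ 𝒜} → ℝ) :
    Matrix (Fin d) (Fin d) ℝ :=
  ∑ a : {a // a ∈ 𝒜}, w a • vecMulVec (a : Fin d → ℝ) (a : Fin d → ℝ)

/-- The simplex `Λ = {w ∈ [0,1]^𝒜 : ∑_a w_a = 1}` of allocations over `𝒜`. -/
def simplexOn {d : ℕ} (𝒜 : Finset (Fin d → ℝ)) : Set ({a // a ∈ 𝒜} → ℝ) :=
  {w | (∀ a, 0 ≤ w a ∧ w a ≤ 1) ∧ ∑ a, w a = 1}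

/-- `astar` is the unique best arm of `𝒜` for the parameter `μ`. -/
def IsBestArm {d : ℕ} (𝒜 : Finset (Fin d → ℝ)) (μ astar : Fin d → ℝ) : Prop :=
  astar ∈ 𝒜 ∧ ∀ a ∈ 𝒜, a ≠ astar → μ ⬝ᵥ a < μ ⬝ᵥ astar

/-- The best arm `a*_μ = argmax_{a ∈ 𝒜} μᵀa` (defined via choice when it exists). -/
noncomputable def bestArm {d : ℕ} (𝒜 : Finset (Fin d → ℝ)) (μ : Fin d → ℝ) : Fin d → ℝ :=
  open scoped Classical in
  if h : ∃ a, IsBestArm 𝒜 μ a then h.choose else 0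

/-- The set of bad parameters
`B(μ) = {λ ∈ ℝ^d : ∃ a ∈ 𝒜 ∖ {a*_μ}, λᵀ(a*_μ − a) < 0}`. -/
def badSet {d : ℕ} (𝒜 : Finset (Fin d → ℝ)) (μ : Fin d → ℝ) : Set (Fin d → ℝ) :=
  {lam | ∃ a ∈ 𝒜, a ≠ bestArm 𝒜 μ ∧ lam ⬝ᵥ (bestArm 𝒜 μ - a) < 0}

/-- `ψ(μ, w) = inf_{λ ∈ B(μ)} ½ (μ−λ)ᵀ (∑_a w_a a aᵀ) (μ−λ)`. -/
noncomputable def psi {d : ℕ} (𝒜 : Finset (Fin d → ℝ)) (μ : Fin d → ℝ)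
    (w : {a // a ∈ 𝒜} → ℝ) : ℝ :=
  sInf ((fun lam => (1 / 2) * ((μ - lam) ⬝ᵥ (armMatrix 𝒜 w).mulVec (μ - lam))) '' badSet 𝒜 μ)

lemma armMatrix_mulVec {d : ℕ} (𝒜 : Finset (Fin d → ℝ)) (w : {a // a ∈ 𝒜} → ℝ)
    (u : Fin d → ℝ) :
    (armMatrix 𝒜 w).mulVec u = ∑ a : {a // a ∈ 𝒜}, (w a * ((a : Fin d → ℝ) ⬝ᵥ u)) • (a : Fin d → ℝ) := by
  funext i
  simp only [armMatrix, mulVec, dotProduct, Matrix.sum_apply, Matrix.smul_apply,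
    vecMulVec_apply, smul_eq_mul, Finset.sum_apply, Pi.smul_apply, Finset.sum_mul]
  rw [Finset.sum_comm]
  refine Finset.sum_congr rfl fun a _ => ?_
  rw [Finset.mul_sum, Finset.sum_mul]
  exact Finset.sum_congr rfl fun j _ => by ring

lemma armMatrix_qf {d : ℕ} (𝒜 : Finset (Fin d → ℝ)) (w : {a // a ∈ 𝒜} → ℝ)
    (u : Fin d → ℝ) :
    u ⬝ᵥ (armMatrix 𝒜 w).mulVec u = ∑ a : {a // a ∈ 𝒜}, w a * ((a : Fin d → ℝ) ⬝ᵥ u)^2 := by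
  rw [armMatrix_mulVec]
  simp only [dotProduct, Finset.sum_apply, Pi.smul_apply, smul_eq_mul, sq,
    Finset.mul_sum, Finset.sum_mul]
  rw [Finset.sum_comm]
  refine Finset.sum_congr rfl fun a _ => ?_
  rw [Finset.sum_comm]
  refine Finset.sum_congr rfl fun i _ => ?_
  refine Finset.sum_congr rfl fun j _ => ?_
  ring

lemma cs_lemma {d : ℕ} {V : Matrix (Fin d) (Fin d) ℝ} (hV : V.PosDef)
    (x u : Fin d → ℝ) (hx : x ≠ 0) :
    (u ⬝ᵥ x)^2 ≤ (u ⬝ᵥ V *ᵥ u) * (x ⬝ᵥ V⁻¹ *ᵥ x) := by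
  have hdet : IsUnit V.det := hV.det_pos.ne'.isUnit
  set p : Fin d → ℝ := V⁻¹ *ᵥ x with hp
  have hVp : V *ᵥ p = x := by
    rw [hp, mulVec_mulVec, Matrix.mul_nonsing_inv _ hdet, one_mulVec]
  have hsymm : Vᵀ = V := hV.isHermitian.eq
  have hc : 0 < x ⬝ᵥ p := by
    have h := hV.inv.dotProduct_mulVec_pos hx
    simpa [hp, star_trivial] using h
  set c : ℝ := x ⬝ᵥ p with hcdef
  set t : ℝ := (u ⬝ᵥ x) / c with ht
  have hpVu : p ⬝ᵥ V *ᵥ u = u ⬝ᵥ x := by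
    rw [dotProduct_mulVec, ← mulVec_transpose, hsymm, hVp, dotProduct_comm]
  have key : 0 ≤ (u - t • p) ⬝ᵥ V *ᵥ (u - t • p) := by
    have := hV.posSemidef.re_dotProduct_nonneg (u - t • p)
    simpa [star_trivial] using this
  have hexp : (u - t • p) ⬝ᵥ V *ᵥ (u - t • p)
      = u ⬝ᵥ V *ᵥ u - 2 * t * (u ⬝ᵥ x) + t^2 * c := by
    rw [mulVec_sub, mulVec_smul, dotProduct_sub, sub_dotProduct, sub_dotProduct,
      dotProduct_smul, smul_dotProduct, smul_dotProduct, dotProduct_smul, hVp,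
      hpVu, hcdef]
    have : p ⬝ᵥ x = x ⬝ᵥ p := dotProduct_comm _ _
    rw [this]
    ring_nf
  have htc : t * c = u ⬝ᵥ x := div_mul_cancel₀ _ hc.ne'
  rw [hexp] at key
  nlinarith [mul_nonneg hc.le key, sq_nonneg t, hc]

/-- If `∑_a w_a a aᵀ` is positive definite then
`ψ(μ,w) = min_{a ∈ 𝒜∖{a*_μ}} (μᵀ(a*_μ − a))² / (2 (a*_μ − a)ᵀ (∑_a w_a a aᵀ)⁻¹ (a*_μ − a))`;
if `∑_a w_a a aᵀ` is not invertible then `ψ(μ,w) = 0`. -/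
theorem psi_closed_form {d : ℕ} (𝒜 : Finset (Fin d → ℝ))
    (hspan : Submodule.span ℝ (𝒜 : Set (Fin d → ℝ)) = ⊤)
    (μ : Fin d → ℝ) (hstar : ∃! astar, IsBestArm 𝒜 μ astar)
    (w : {a // a ∈ 𝒜} → ℝ) (hw : w ∈ simplexOn 𝒜) :
    ((armMatrix 𝒜 w).PosDef →
      psi 𝒜 μ w = sInf ((fun a => (μ ⬝ᵥ (bestArm 𝒜 μ - a)) ^ 2 /
          (2 * ((bestArm 𝒜 μ - a) ⬝ᵥ (armMatrix 𝒜 w)⁻¹.mulVec (bestArm 𝒜 μ - a)))) ''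
        {a | a ∈ 𝒜 ∧ a ≠ bestArm 𝒜 μ})) ∧
    (¬IsUnit (armMatrix 𝒜 w).det → psi 𝒜 μ w = 0) := by
  obtain ⟨astar, hastar, -⟩ := hstar
  have hex : ∃ a, IsBestArm 𝒜 μ a := ⟨astar, hastar⟩
  have hb : IsBestArm 𝒜 μ (bestArm 𝒜 μ) := by
    rw [bestArm, dif_pos hex]; exact hex.choose_spec
  obtain ⟨hw01, hwsum⟩ := hw
  set b : Fin d → ℝ := bestArm 𝒜 μ with hbdef
  set V : Matrix (Fin d) (Fin d) ℝ := armMatrix 𝒜 w with hVdef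
  set f : (Fin d → ℝ) → ℝ := fun lam => (1 / 2) * ((μ - lam) ⬝ᵥ V *ᵥ (μ - lam)) with hfdef
  have hpsi : psi 𝒜 μ w = sInf (f '' badSet 𝒜 μ) := rfl
  have hqfnn : ∀ u, 0 ≤ u ⬝ᵥ V *ᵥ u := fun u => by
    rw [hVdef, armMatrix_qf]
    exact Finset.sum_nonneg fun a _ => mul_nonneg (hw01 a).1 (sq_nonneg _)
  have hlb : ∀ y ∈ f '' badSet 𝒜 μ, (0:ℝ) ≤ y := by
    rintro y ⟨lam, -, rfl⟩
    have := hqfnn (μ - lam)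
    simp only [hfdef]
    linarith
  have hbdd : BddBelow (f '' badSet 𝒜 μ) := ⟨0, hlb⟩
  have hm : ∀ a ∈ 𝒜, a ≠ b → 0 < μ ⬝ᵥ (b - a) := by
    intro a ha hne
    have := hb.2 a ha hne
    rw [dotProduct_sub]
    linarith
  have hker : ∀ v : Fin d → ℝ, (∀ a ∈ 𝒜, v ⬝ᵥ a = 0) → v = 0 := by
    intro v hv
    let φ : (Fin d → ℝ) →ₗ[ℝ] ℝ :=
      { toFun := fun u => v ⬝ᵥ u
        map_add' := fun x y => dotProduct_add v x y
        map_smul' := fun c x => by simp [dotProduct_smul] }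
    have hle : Submodule.span ℝ (𝒜 : Set (Fin d → ℝ)) ≤ LinearMap.ker φ :=
      Submodule.span_le.2 fun a ha => hv a ha
    have : φ v = 0 := hle (hspan ▸ Submodule.mem_top)
    exact dotProduct_self_eq_zero.1 this
  constructor
  · -- positive definite case
    intro hV
    have hdet : IsUnit V.det := hV.det_pos.ne'.isUnit
    set g : (Fin d → ℝ) → ℝ := fun a => (μ ⬝ᵥ (b - a)) ^ 2 /
        (2 * ((b - a) ⬝ᵥ V⁻¹ *ᵥ (b - a))) with hgdef
    by_cases hS : ∃ a ∈ 𝒜, a ≠ b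
    · obtain ⟨a₁, ha₁, hne₁⟩ := hS
      have hcpos : ∀ a : Fin d → ℝ, a ≠ b → 0 < (b - a) ⬝ᵥ V⁻¹ *ᵥ (b - a) := by
        intro a hne
        have hx : b - a ≠ 0 := sub_ne_zero.2 (Ne.symm hne)
        have := hV.inv.dotProduct_mulVec_pos hx
        simpa [star_trivial] using this
      -- the bad set is nonempty
      have hx₁ : b - a₁ ≠ 0 := sub_ne_zero.2 (Ne.symm hne₁)
      have hxx₁ : 0 < (b - a₁) ⬝ᵥ (b - a₁) := by
        rcases lt_or_eq_of_le (Finset.sum_nonneg fun i _ => mul_self_nonneg ((b - a₁) i) :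
          (0:ℝ) ≤ (b - a₁) ⬝ᵥ (b - a₁)) with h | h
        · exact h
        · exact absurd (dotProduct_self_eq_zero.1 h.symm) hx₁
      have hlam₀ : (-(b - a₁)) ∈ badSet 𝒜 μ := by
        refine ⟨a₁, ha₁, hne₁, ?_⟩
        rw [neg_dotProduct]
        linarith
      have hSne : (f '' badSet 𝒜 μ).Nonempty := ⟨f _, _, hlam₀, rfl⟩
      -- the target set
      have hTfin : ((g '' {a | a ∈ 𝒜 ∧ a ≠ b})).Finite :=
        ((𝒜.finite_toSet.subset (fun a ha => ha.1)).image g)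
      have hTne : (g '' {a | a ∈ 𝒜 ∧ a ≠ b}).Nonempty := ⟨g a₁, a₁, ⟨ha₁, hne₁⟩, rfl⟩
      rw [hpsi]
      refine le_antisymm ?_ ?_
      · -- psi ≤ sInf T
        obtain ⟨a₀, ⟨ha₀, hne₀⟩, hval⟩ := hTne.csInf_mem hTfin
        rw [← hval]
        set x : Fin d → ℝ := b - a₀ with hxdef
        set m : ℝ := μ ⬝ᵥ x with hmdef
        have hm0 : 0 < m := hm a₀ ha₀ hne₀
        set p : Fin d → ℝ := V⁻¹ *ᵥ x with hpdef
        set c : ℝ := x ⬝ᵥ p with hcdef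
        have hc : 0 < c := hcpos a₀ hne₀
        have hVp : V *ᵥ p = x := by
          rw [hpdef, mulVec_mulVec, Matrix.mul_nonsing_inv _ hdet, one_mulVec]
        have hpx : p ⬝ᵥ x = c := dotProduct_comm _ _
        have hga₀ : g a₀ = m ^ 2 / (2 * c) := rfl
        refine le_of_forall_pos_le_add fun ε hε => ?_
        have hden : 0 < m + c / 2 := by linarith
        set δ : ℝ := min 1 (ε / (m + c / 2)) with hδdef
        have hδpos : 0 < δ := lt_min one_pos (div_pos hε hden)
        have hδ1 : δ ≤ 1 := min_le_left _ _
        have hδ2 : δ * (m + c / 2) ≤ ε := by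
          rw [← div_mul_cancel₀ ε hden.ne']
          exact mul_le_mul_of_nonneg_right (min_le_right _ _) hden.le
        set t : ℝ := m / c + δ with htdef
        set lam : Fin d → ℝ := μ - t • p with hlamdef
        have hlamx : lam ⬝ᵥ x = -(δ * c) := by
          rw [hlamdef, sub_dotProduct, smul_dotProduct, hpx, ← hmdef, htdef]
          rw [smul_eq_mul, add_mul, div_mul_cancel₀ _ hc.ne']
          ring
        have hmem : lam ∈ badSet 𝒜 μ := by
          refine ⟨a₀, ha₀, hne₀, ?_⟩
          rw [show bestArm 𝒜 μ - a₀ = x from rfl, hlamx]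
          nlinarith
        have hle : sInf (f '' badSet 𝒜 μ) ≤ f lam := csInf_le hbdd ⟨lam, hmem, rfl⟩
        refine hle.trans ?_
        have hflam : f lam = 1 / 2 * (t ^ 2 * c) := by
          simp only [hfdef, hlamdef, sub_sub_cancel]
          rw [mulVec_smul, dotProduct_smul, smul_dotProduct, hVp]
          rw [smul_eq_mul, smul_eq_mul]
          rw [dotProduct_comm p x, hcdef]
          ring
        rw [hflam, hga₀]
        have hmc : m / c * c = m := div_mul_cancel₀ _ hc.ne'
        rw [htdef]
        have h2c : m ^ 2 / (2 * c) = (m / c) ^ 2 * c / 2 := by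
          field_simp
        rw [h2c]
        nlinarith [sq_nonneg δ, hδpos, hc, hm0, mul_pos hδpos hc]
      · -- sInf T ≤ psi
        refine le_csInf hSne ?_
        rintro y ⟨lam, ⟨a, ha, hne, hlt⟩, rfl⟩
        have hxne : b - a ≠ 0 := sub_ne_zero.2 (Ne.symm hne)
        have h1 : sInf (g '' {a | a ∈ 𝒜 ∧ a ≠ b}) ≤ g a :=
          csInf_le hTfin.bddBelow ⟨a, ⟨ha, hne⟩, rfl⟩
        refine h1.trans ?_
        set x : Fin d → ℝ := b - a with hxdef
        set u : Fin d → ℝ := μ - lam with hudef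
        set m : ℝ := μ ⬝ᵥ x with hmdef
        have hm0 : 0 < m := hm a ha hne
        set c : ℝ := x ⬝ᵥ V⁻¹ *ᵥ x with hcdef
        have hc : 0 < c := hcpos a hne
        have hcs : (u ⬝ᵥ x) ^ 2 ≤ (u ⬝ᵥ V *ᵥ u) * c := cs_lemma hV x u hxne
        have hux : m ≤ u ⬝ᵥ x := by
          rw [hudef, sub_dotProduct, ← hmdef]
          have : lam ⬝ᵥ x < 0 := hlt
          linarith
        have hqf : 0 ≤ u ⬝ᵥ V *ᵥ u := hqfnn u
        have hga : g a = m ^ 2 / (2 * c) := rfl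
        have hfl : f lam = 1 / 2 * (u ⬝ᵥ V *ᵥ u) := rfl
        rw [hga, hfl, div_le_iff₀ (by linarith : (0:ℝ) < 2 * c)]
        nlinarith
    · -- no suboptimal arm: both sides are sInf ∅ = 0
      push_neg at hS
      have h1 : badSet 𝒜 μ = ∅ := by
        ext lam
        simp only [badSet, Set.mem_setOf_eq, Set.mem_empty_iff_false, iff_false, not_exists]
        rintro a ⟨ha, hne, -⟩
        exact hne (hS a ha)
      have h2 : {a | a ∈ 𝒜 ∧ a ≠ b} = (∅ : Set (Fin d → ℝ)) := by
        ext a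
        simp only [Set.mem_setOf_eq, Set.mem_empty_iff_false, iff_false, not_and]
        intro ha
        simpa using hS a ha
      rw [hpsi, h1, h2, Set.image_empty, Set.image_empty]
  · -- non-invertible case
    intro hdet
    have hdet0 : V.det = 0 := by
      by_contra h
      exact hdet (isUnit_iff_ne_zero.2 h)
    obtain ⟨v, hvne, hVv⟩ := (Matrix.exists_mulVec_eq_zero_iff).2 hdet0
    -- each arm with positive weight is orthogonal to v
    have hsum0 : ∑ a : {a // a ∈ 𝒜}, w a * ((a : Fin d → ℝ) ⬝ᵥ v) ^ 2 = 0 := by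
      rw [← armMatrix_qf, ← hVdef, hVv, dotProduct_zero]
    have hterm : ∀ a : {a // a ∈ 𝒜}, w a * ((a : Fin d → ℝ) ⬝ᵥ v) ^ 2 = 0 := by
      have := (Finset.sum_eq_zero_iff_of_nonneg
        (fun a _ => mul_nonneg (hw01 a).1 (sq_nonneg _))).1 hsum0
      exact fun a => this a (Finset.mem_univ a)
    obtain ⟨a₂, hwa₂⟩ : ∃ a : {a // a ∈ 𝒜}, w a ≠ 0 := by
      by_contra h
      push_neg at h
      rw [Finset.sum_congr rfl (fun a _ => h a)] at hwsum
      simp at hwsum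
    have ha₂v : (a₂ : Fin d → ℝ) ⬝ᵥ v = 0 := by
      have := hterm a₂
      rcases mul_eq_zero.1 this with h | h
      · exact absurd h hwa₂
      · exact pow_eq_zero_iff two_ne_zero |>.1 h
    -- find a suboptimal arm not orthogonal to v
    have hA : ∃ a ∈ 𝒜, a ≠ b ∧ v ⬝ᵥ (b - a) ≠ 0 := by
      by_contra h
      push_neg at h
      have hvb : ∀ a ∈ 𝒜, v ⬝ᵥ a = v ⬝ᵥ b := by
        intro a ha
        by_cases hab : a = b
        · rw [hab]
        · have := h a ha hab
          rw [dotProduct_sub] at this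
          linarith [sub_eq_zero.1 this]
      have hvb0 : v ⬝ᵥ b = 0 := by
        rw [← hvb a₂ a₂.2, dotProduct_comm]
        exact ha₂v
      have : ∀ a ∈ 𝒜, v ⬝ᵥ a = 0 := fun a ha => by rw [hvb a ha, hvb0]
      exact hvne (hker v this)
    obtain ⟨a₃, ha₃, hne₃, hs⟩ := hA
    set s : ℝ := v ⬝ᵥ (b - a₃) with hsdef
    set m₃ : ℝ := μ ⬝ᵥ (b - a₃) with hm₃def
    set lam : Fin d → ℝ := μ + (-(m₃ + 1) / s) • v with hlamdef
    have hmem : lam ∈ badSet 𝒜 μ := by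
      refine ⟨a₃, ha₃, hne₃, ?_⟩
      show lam ⬝ᵥ (b - a₃) < 0
      rw [hlamdef, add_dotProduct, smul_dotProduct, ← hsdef, ← hm₃def, smul_eq_mul,
        div_mul_cancel₀ _ hs]
      linarith
    have hflam : f lam = 0 := by
      have hml : μ - lam = (-(-(m₃ + 1) / s)) • v := by
        rw [hlamdef, neg_smul]
        abel
      simp only [hfdef, hml]
      rw [mulVec_smul, hVv, smul_zero, dotProduct_zero, mul_zero]
    rw [hpsi]
    refine le_antisymm ?_ (le_csInf ⟨f lam, lam, hmem, rfl⟩ hlb)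
    have := csInf_le hbdd ⟨lam, hmem, rfl⟩
    rw [hflam] at this
    exact this
end

section
/- The function ψ is jointly continuous at (μ, w) for every w ∈ Λ: there is an open neighborhood U of μ such that for every μ' ∈ U the best arm a*_{μ'} is unique, and for every sequence (μ_t, w_t) in U × Λ converging to (μ, w), ψ(μ_t, w_t) converges to ψ(μ, w). -/
open Matrix

/-! ### Auxiliary lemmas -/


lemma armQuad {d : ℕ} (𝒜 : Finset (Fin d → ℝ)) (w : {a // a ∈ 𝒜} → ℝ) (x : Fin d → ℝ) :
    x ⬝ᵥ (armMatrix 𝒜 w).mulVec x = ∑ a : {a // a ∈ 𝒜}, w a * ((a : Fin d → ℝ) ⬝ᵥ x)^2 := by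
  simp only [armMatrix, Matrix.mulVec, dotProduct, Matrix.sum_apply, Matrix.smul_apply,
    vecMulVec_apply, smul_eq_mul, Finset.sum_mul, Finset.mul_sum]
  rw [Finset.sum_comm]
  conv_lhs => enter [2, y]; rw [Finset.sum_comm]
  rw [Finset.sum_comm]
  refine Finset.sum_congr rfl fun a _ => ?_
  rw [sq, Finset.sum_mul_sum, Finset.mul_sum]
  refine Finset.sum_congr rfl fun i _ => ?_
  rw [Finset.mul_sum]
  refine Finset.sum_congr rfl fun j _ => ?_
  ring

lemma bestArm_eq_of_isBestArm {d : ℕ} {𝒜 : Finset (Fin d → ℝ)} {μ astar : Fin d → ℝ}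
    (h : IsBestArm 𝒜 μ astar) : bestArm 𝒜 μ = astar := by
  classical
  have hex : ∃ a, IsBestArm 𝒜 μ a := ⟨astar, h⟩
  rw [bestArm, dif_pos hex]
  have h2 := hex.choose_spec
  by_contra hne
  have h3 := h.2 _ h2.1 hne
  have h4 := h2.2 _ h.1 (Ne.symm hne)
  linarith

lemma dot_abs_le {d : ℕ} (a x : Fin d → ℝ) : |a ⬝ᵥ x| ≤ (∑ i, |a i|) * ‖x‖ := by
  rw [Finset.sum_mul]
  refine (Finset.abs_sum_le_sum_abs _ _).trans (Finset.sum_le_sum fun i _ => ?_)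
  rw [abs_mul]
  refine mul_le_mul_of_nonneg_left ?_ (abs_nonneg _)
  simpa [Real.norm_eq_abs] using norm_le_pi_norm x i

set_option maxHeartbeats 1000000 in
open Filter in
/-- `ψ` is jointly continuous at `(μ, w)` for every `w ∈ Λ`: there is an open neighborhood
`U` of `μ` on which the best arm is unique, and along any sequence `(μ_t, w_t) ∈ U × Λ`
converging to `(μ, w)`, `ψ(μ_t, w_t) → ψ(μ, w)`. -/
theorem psi_continuous {d : ℕ} (𝒜 : Finset (Fin d → ℝ))
    (hspan : Submodule.span ℝ (𝒜 : Set (Fin d → ℝ)) = ⊤)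
    (μ : Fin d → ℝ) (hstar : ∃! astar, IsBestArm 𝒜 μ astar)
    (w : {a // a ∈ 𝒜} → ℝ) (hw : w ∈ simplexOn 𝒜) :
    ∃ U : Set (Fin d → ℝ), IsOpen U ∧ μ ∈ U ∧
      (∀ μ' ∈ U, ∃! astar', IsBestArm 𝒜 μ' astar') ∧
      ∀ (μs : ℕ → Fin d → ℝ) (ws : ℕ → {a // a ∈ 𝒜} → ℝ),
        (∀ t, μs t ∈ U) → (∀ t, ws t ∈ simplexOn 𝒜) →
        Tendsto μs atTop (nhds μ) → Tendsto ws atTop (nhds w) →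
        Tendsto (fun t => psi 𝒜 (μs t) (ws t)) atTop (nhds (psi 𝒜 μ w)) := by
  classical
  obtain ⟨astar, hbest, huniq⟩ := hstar
  set U : Set (Fin d → ℝ) := {m | ∀ a ∈ 𝒜, a ≠ astar → m ⬝ᵥ a < m ⬝ᵥ astar} with hUdef
  have hdotc : ∀ a : Fin d → ℝ, Continuous fun m : Fin d → ℝ => m ⬝ᵥ a := by
    intro a
    simp only [dotProduct]
    exact continuous_finset_sum _ fun i _ => (continuous_apply i).mul continuous_const
  have hUopen : IsOpen U := by
    have : U = ⋂ a ∈ 𝒜.filter (· ≠ astar), {m : Fin d → ℝ | m ⬝ᵥ a < m ⬝ᵥ astar} := by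
      ext m
      simp only [hUdef, Set.mem_setOf_eq, Set.mem_iInter, Finset.mem_filter]
      exact ⟨fun h a ⟨ha, hne⟩ => h a ha hne, fun h a ha hne => h a ⟨ha, hne⟩⟩
    rw [this]
    exact isOpen_biInter_finset fun a _ => isOpen_lt (hdotc a) (hdotc astar)
  have hμU : μ ∈ U := hbest.2
  have hbest' : ∀ m ∈ U, IsBestArm 𝒜 m astar := fun m hm => ⟨hbest.1, hm⟩
  have huniq' : ∀ m ∈ U, ∃! a', IsBestArm 𝒜 m a' := by
    intro m hm
    refine ⟨astar, hbest' m hm, fun b hb => ?_⟩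
    by_contra hne
    have h1 := hm b hb.1 hne
    have h2 := hb.2 astar hbest.1 (Ne.symm hne)
    linarith
  set S : Set (Fin d → ℝ) := {lam | ∃ a ∈ 𝒜, a ≠ astar ∧ lam ⬝ᵥ (astar - a) < 0} with hSdef
  have hbad : ∀ m ∈ U, badSet 𝒜 m = S := by
    intro m hm
    rw [badSet, bestArm_eq_of_isBestArm (hbest' m hm)]
  set f : (Fin d → ℝ) → ({a // a ∈ 𝒜} → ℝ) → (Fin d → ℝ) → ℝ :=
    fun m v lam => (1/2) * ∑ a : {a // a ∈ 𝒜}, v a * ((a : Fin d → ℝ) ⬝ᵥ (m - lam))^2 with hfdef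
  have hpsi : ∀ m ∈ U, ∀ v, psi 𝒜 m v = sInf (f m v '' S) := by
    intro m hm v
    rw [psi, hbad m hm]
    have hfun : (fun lam => (1/2) * ((m - lam) ⬝ᵥ (armMatrix 𝒜 v).mulVec (m - lam))) = f m v :=
      funext fun lam => by rw [armQuad]
    rw [hfun]
  refine ⟨U, hUopen, hμU, huniq', ?_⟩
  intro μs ws hμsU hwsΛ hμs hws
  rcases Set.eq_empty_or_nonempty S with hS | hSne
  · have h0 : ∀ t, psi 𝒜 (μs t) (ws t) = 0 := fun t => by
      rw [hpsi (μs t) (hμsU t), hS, Set.image_empty, Real.sInf_empty]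
    have h0' : psi 𝒜 μ w = 0 := by rw [hpsi μ hμU, hS, Set.image_empty, Real.sInf_empty]
    simp only [h0, h0']
    exact tendsto_const_nhds
  -- nonneg facts
  have hfnn : ∀ m, ∀ v ∈ simplexOn 𝒜, ∀ lam, 0 ≤ f m v lam := by
    intro m v hv lam
    have : 0 ≤ ∑ a : {a // a ∈ 𝒜}, v a * ((a : Fin d → ℝ) ⬝ᵥ (m - lam))^2 :=
      Finset.sum_nonneg fun a _ => mul_nonneg (hv.1 a).1 (sq_nonneg _)
    simp only [hfdef]; linarith
  have hbdd : ∀ m, ∀ v ∈ simplexOn 𝒜, BddBelow (f m v '' S) := by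
    intro m v hv
    exact ⟨0, fun y ⟨lam, _, hy⟩ => hy ▸ hfnn m v hv lam⟩
  have hψnn : 0 ≤ psi 𝒜 μ w := by
    rw [hpsi μ hμU]
    exact le_csInf (hSne.image _) fun y ⟨lam, _, hy⟩ => hy ▸ hfnn μ w hw lam
  have hψle : ∀ lam ∈ S, psi 𝒜 μ w ≤ f μ w lam := by
    intro lam hlam
    rw [hpsi μ hμU]
    exact csInf_le (hbdd μ w hw) ⟨lam, hlam, rfl⟩
  have hψtnn : ∀ t, 0 ≤ psi 𝒜 (μs t) (ws t) := by
    intro t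
    rw [hpsi (μs t) (hμsU t)]
    exact le_csInf (hSne.image _) fun y ⟨lam, _, hy⟩ => hy ▸ hfnn (μs t) (ws t) (hwsΛ t) lam
  have hψtle : ∀ t, ∀ lam ∈ S, psi 𝒜 (μs t) (ws t) ≤ f (μs t) (ws t) lam := by
    intro t lam hlam
    rw [hpsi (μs t) (hμsU t)]
    exact csInf_le (hbdd (μs t) (ws t) (hwsΛ t)) ⟨lam, hlam, rfl⟩
  -- componentwise convergence
  have hμc : ∀ i, Tendsto (fun t => μs t i) atTop (nhds (μ i)) := fun i => (tendsto_pi_nhds.1 hμs) i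
  have hwc : ∀ a, Tendsto (fun t => ws t a) atTop (nhds (w a)) := fun a => (tendsto_pi_nhds.1 hws) a
  have hftend : ∀ lam, Tendsto (fun t => f (μs t) (ws t) lam) atTop (nhds (f μ w lam)) := by
    intro lam
    simp only [hfdef, dotProduct, Pi.sub_apply]
    refine Tendsto.const_mul _ (tendsto_finset_sum _ fun a _ => (hwc a).mul (Tendsto.pow ?_ 2))
    exact tendsto_finset_sum _ fun i _ =>
      (tendsto_const_nhds.mul ((hμc i).sub tendsto_const_nhds))
  set ψ := psi 𝒜 μ w with hψdef
  rw [Metric.tendsto_nhds]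
  intro ε hε
  have hup : ∀ᶠ t in atTop, psi 𝒜 (μs t) (ws t) < ψ + ε := by
    have h1 : sInf (f μ w '' S) < ψ + ε/2 := by rw [hψdef, hpsi μ hμU]; linarith
    obtain ⟨y, ⟨lam1, hlam1, rfl⟩, hy⟩ := exists_lt_of_csInf_lt (hSne.image _) h1
    have h2 : f μ w lam1 < ψ + ε := by linarith
    filter_upwards [(hftend lam1).eventually_lt_const h2] with t ht
    exact lt_of_le_of_lt (hψtle t lam1 hlam1) ht
  have hlow : ∀ᶠ t in atTop, ψ - ε < psi 𝒜 (μs t) (ws t) := by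
    set g : (Fin d → ℝ) → ℝ :=
      fun x => ∑ a : {a // a ∈ 𝒜}, w a * ((a : Fin d → ℝ) ⬝ᵥ x)^2 with hgdef
    have hgnn : ∀ x, 0 ≤ g x :=
      fun x => Finset.sum_nonneg fun a _ => mul_nonneg (hw.1 a).1 (sq_nonneg _)
    have hfg : ∀ lam, f μ w lam = 1/2 * g (μ - lam) := fun lam => rfl
    by_cases hdeg : ∃ x, x ≠ 0 ∧ g x = 0
    · -- degenerate case : ψ = 0
      obtain ⟨x, hx0, hgx⟩ := hdeg
      have hsupp : ∀ a : {a // a ∈ 𝒜}, w a ≠ 0 → (a : Fin d → ℝ) ⬝ᵥ x = 0 := by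
        intro a ha
        have h0 := (Finset.sum_eq_zero_iff_of_nonneg
          (fun a _ => mul_nonneg (hw.1 a).1 (sq_nonneg _))).1 hgx a (Finset.mem_univ a)
        rcases mul_eq_zero.1 h0 with h | h
        · exact absurd h ha
        · exact (pow_eq_zero_iff two_ne_zero).1 h
      have hex1 : ∃ a ∈ 𝒜, a ≠ astar ∧ x ⬝ᵥ (astar - a) ≠ 0 := by
        by_contra hcon
        push_neg at hcon
        have hall : ∀ a ∈ 𝒜, x ⬝ᵥ a = x ⬝ᵥ astar := by
          intro a ha
          rcases eq_or_ne a astar with rfl | hne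
          · rfl
          · have h1 := hcon a ha hne
            rw [dotProduct_sub] at h1
            linarith
        have hsum1 : (∑ a : {a // a ∈ 𝒜}, w a) ≠ 0 := by rw [hw.2]; norm_num
        obtain ⟨a0, -, ha0⟩ := Finset.exists_ne_zero_of_sum_ne_zero hsum1
        have h1 : x ⬝ᵥ (a0 : Fin d → ℝ) = 0 := by
          rw [dotProduct_comm]; exact hsupp a0 ha0
        have h2 : x ⬝ᵥ astar = 0 := by rw [← hall a0 a0.2]; exact h1
        have hzero : ∀ a ∈ 𝒜, x ⬝ᵥ a = 0 := fun a ha => by rw [hall a ha]; exact h2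
        let L : (Fin d → ℝ) →ₗ[ℝ] ℝ :=
          { toFun := fun y => x ⬝ᵥ y
            map_add' := fun y z => dotProduct_add x y z
            map_smul' := fun r y => dotProduct_smul r x y }
        have hker : Submodule.span ℝ (𝒜 : Set (Fin d → ℝ)) ≤ LinearMap.ker L :=
          Submodule.span_le.2 fun a ha => by
            simpa [L, LinearMap.mem_ker] using hzero a ha
        rw [hspan] at hker
        have hxx : x ⬝ᵥ x = 0 := hker Submodule.mem_top
        exact hx0 (dotProduct_self_eq_zero.1 hxx)
      obtain ⟨a1, ha1A, ha1ne, hg1⟩ := hex1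
      set r : ℝ := -((μ ⬝ᵥ (astar - a1)) + 1) / (x ⬝ᵥ (astar - a1)) with hrdef
      set lam := μ + r • x with hlamdef
      have hlamS : lam ∈ S := by
        refine ⟨a1, ha1A, ha1ne, ?_⟩
        have hdec : lam ⬝ᵥ (astar - a1) = μ ⬝ᵥ (astar - a1) + r * (x ⬝ᵥ (astar - a1)) := by
          rw [hlamdef, add_dotProduct, smul_dotProduct, smul_eq_mul]
        rw [hdec, hrdef, div_mul_cancel₀ _ hg1]
        linarith
      have hflam : f μ w lam = 0 := by
        have hsub : μ - lam = (-r) • x := by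
          rw [hlamdef]; module
        rw [hfg, hsub]
        have hg2 : g ((-r) • x) = r^2 * g x := by
          simp only [hgdef, Finset.mul_sum]
          refine Finset.sum_congr rfl fun a _ => ?_
          rw [dotProduct_smul, smul_eq_mul, mul_pow]
          ring
        rw [hg2, hgx]
        ring
      have hψ0 : ψ = 0 := by
        have hle : ψ ≤ 0 := hflam ▸ hψle lam hlamS
        linarith [hψnn]
      filter_upwards with t
      have := hψtnn t
      rw [hψ0]
      linarith
    · -- positive definite case
      push_neg at hdeg
      have hpos : ∀ x, x ≠ 0 → 0 < g x :=
        fun x hx => lt_of_le_of_ne (hgnn x) (Ne.symm (hdeg x hx))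
      obtain ⟨lam₀, hlam₀⟩ := id hSne
      obtain ⟨a1, ha1A, ha1ne, -⟩ := hlam₀
      have hy0 : astar - a1 ≠ 0 := sub_ne_zero.2 (Ne.symm ha1ne)
      have hx₀ : (‖astar - a1‖⁻¹ • (astar - a1)) ∈ Metric.sphere (0 : Fin d → ℝ) 1 := by
        rw [mem_sphere_zero_iff_norm, norm_smul, norm_inv, norm_norm,
          inv_mul_cancel₀ (norm_ne_zero_iff.2 hy0)]
      have hgc : Continuous g := by
        simp only [hgdef, dotProduct]
        exact continuous_finset_sum _ fun a _ => continuous_const.mul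
          ((continuous_finset_sum _ fun i _ => continuous_const.mul (continuous_apply i)).pow 2)
      obtain ⟨x₁, hx₁s, hx₁min⟩ :=
        (isCompact_sphere (0 : Fin d → ℝ) 1).exists_isMinOn ⟨_, hx₀⟩ hgc.continuousOn
      have hx₁n : ‖x₁‖ = 1 := mem_sphere_zero_iff_norm.1 hx₁s
      set c := g x₁ with hcdef
      have hc : 0 < c := hpos x₁ (by intro h; rw [h] at hx₁n; simp at hx₁n)
      have hghom : ∀ (r : ℝ) (x : Fin d → ℝ), g (r • x) = r^2 * g x := by
        intro r x
        simp only [hgdef, Finset.mul_sum]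
        refine Finset.sum_congr rfl fun a _ => ?_
        rw [dotProduct_smul, smul_eq_mul, mul_pow]
        ring
      have hglb : ∀ x : Fin d → ℝ, c * ‖x‖^2 ≤ g x := by
        intro x
        rcases eq_or_ne x 0 with rfl | hx
        · simp [hgdef]
        · have hxn : (‖x‖ : ℝ) ≠ 0 := norm_ne_zero_iff.2 hx
          have hu : (‖x‖⁻¹ • x) ∈ Metric.sphere (0 : Fin d → ℝ) 1 := by
            rw [mem_sphere_zero_iff_norm, norm_smul, norm_inv, norm_norm, inv_mul_cancel₀ hxn]
          have h1 : c ≤ g (‖x‖⁻¹ • x) := hx₁min hu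
          have h2 : g x = ‖x‖^2 * g (‖x‖⁻¹ • x) := by
            rw [← hghom]
            congr 1
            rw [smul_smul, mul_inv_cancel₀ hxn, one_smul]
          nlinarith [norm_nonneg x]
      set sA : {a // a ∈ 𝒜} → ℝ := fun a => ∑ i, |(a : Fin d → ℝ) i| with hsdef
      set K := ∑ a : {a // a ∈ 𝒜}, (sA a)^2 with hKdef
      have hKnn : 0 ≤ K := Finset.sum_nonneg fun a _ => sq_nonneg _
      have hsql : ∀ (a : {a // a ∈ 𝒜}) (z : Fin d → ℝ),
          ((a : Fin d → ℝ) ⬝ᵥ z)^2 ≤ (sA a)^2 * ‖z‖^2 := by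
        intro a z
        rw [← mul_pow, ← sq_abs ((a : Fin d → ℝ) ⬝ᵥ z)]
        exact pow_le_pow_left₀ (abs_nonneg _) (dot_abs_le _ z) 2
      set E : ℕ → ℝ := fun t => ∑ a : {a // a ∈ 𝒜}, |ws t a - w a| * (sA a)^2 with hEdef
      have hEnn : ∀ t, 0 ≤ E t :=
        fun t => Finset.sum_nonneg fun a _ => mul_nonneg (abs_nonneg _) (sq_nonneg _)
      have hEt : Tendsto E atTop (nhds 0) := by
        have h : Tendsto (fun t => ∑ a : {a // a ∈ 𝒜}, |ws t a - w a| * (sA a)^2) atTop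
            (nhds (∑ a : {a // a ∈ 𝒜}, |w a - w a| * (sA a)^2)) :=
          tendsto_finset_sum _
            (fun a _ => (((hwc a).sub tendsto_const_nhds).abs).mul_const ((sA a)^2))
        rw [hEdef]; simpa using h
      have hqdiff : ∀ (v : {a // a ∈ 𝒜} → ℝ) (x : Fin d → ℝ),
          |(∑ a : {a // a ∈ 𝒜}, v a * ((a : Fin d → ℝ) ⬝ᵥ x)^2) - g x| ≤
            (∑ a : {a // a ∈ 𝒜}, |v a - w a| * (sA a)^2) * ‖x‖^2 := by
        intro v x
        rw [hgdef, ← Finset.sum_sub_distrib, Finset.sum_mul]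
        refine (Finset.abs_sum_le_sum_abs _ _).trans (Finset.sum_le_sum fun a _ => ?_)
        rw [← sub_mul, abs_mul, abs_of_nonneg (sq_nonneg ((a : Fin d → ℝ) ⬝ᵥ x))]
        calc |v a - w a| * ((a : Fin d → ℝ) ⬝ᵥ x)^2
            ≤ |v a - w a| * ((sA a)^2 * ‖x‖^2) :=
              mul_le_mul_of_nonneg_left (hsql a x) (abs_nonneg _)
          _ = |v a - w a| * (sA a)^2 * ‖x‖^2 := by ring
      have hgdiff : ∀ x y : Fin d → ℝ, |g x - g y| ≤ K * ‖x - y‖ * (‖x‖ + ‖y‖) := by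
        intro x y
        simp only [hgdef]
        rw [← Finset.sum_sub_distrib]
        have hrw : K * ‖x - y‖ * (‖x‖ + ‖y‖)
            = ∑ a : {a // a ∈ 𝒜}, (sA a)^2 * (‖x - y‖ * (‖x‖ + ‖y‖)) := by
          rw [hKdef, Finset.sum_mul, Finset.sum_mul]
          exact Finset.sum_congr rfl fun a _ => by ring
        rw [hrw]
        refine (Finset.abs_sum_le_sum_abs _ _).trans (Finset.sum_le_sum fun a _ => ?_)
        have hfact : w a * ((a : Fin d → ℝ) ⬝ᵥ x)^2 - w a * ((a : Fin d → ℝ) ⬝ᵥ y)^2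
            = w a * (((a : Fin d → ℝ) ⬝ᵥ (x - y)) * ((a : Fin d → ℝ) ⬝ᵥ x + (a : Fin d → ℝ) ⬝ᵥ y)) := by
          rw [dotProduct_sub]
          ring
        rw [hfact, abs_mul, abs_mul]
        have hw1 : |w a| ≤ 1 := by
          rw [abs_of_nonneg (hw.1 a).1]; exact (hw.1 a).2
        have hd1 : |(a : Fin d → ℝ) ⬝ᵥ (x - y)| ≤ sA a * ‖x - y‖ := dot_abs_le _ _
        have hd2 : |(a : Fin d → ℝ) ⬝ᵥ x + (a : Fin d → ℝ) ⬝ᵥ y| ≤ sA a * (‖x‖ + ‖y‖) := by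
          refine (abs_add_le _ _).trans ?_
          rw [mul_add]
          exact add_le_add (dot_abs_le _ _) (dot_abs_le _ _)
        have hs0 : 0 ≤ sA a := Finset.sum_nonneg fun i _ => abs_nonneg _
        calc |w a| * (|(a : Fin d → ℝ) ⬝ᵥ (x - y)| * |(a : Fin d → ℝ) ⬝ᵥ x + (a : Fin d → ℝ) ⬝ᵥ y|)
            ≤ 1 * ((sA a * ‖x - y‖) * (sA a * (‖x‖ + ‖y‖))) := by
              have hnn1 : (0:ℝ) ≤ |(a : Fin d → ℝ) ⬝ᵥ (x - y)| := abs_nonneg _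
              have hnn2 : (0:ℝ) ≤ |(a : Fin d → ℝ) ⬝ᵥ x + (a : Fin d → ℝ) ⬝ᵥ y| := abs_nonneg _
              have hnn3 : (0:ℝ) ≤ sA a * ‖x - y‖ := mul_nonneg hs0 (norm_nonneg _)
              have t1 := mul_le_mul hd1 hd2 hnn2 hnn3
              have t2 := mul_le_mul_of_nonneg_right hw1 (mul_nonneg hnn1 hnn2)
              nlinarith [t1, t2]
          _ = (sA a)^2 * (‖x - y‖ * (‖x‖ + ‖y‖)) := by ring
      set R := Real.sqrt (4*(ψ+1)/c) with hRdef
      have hRnn : 0 ≤ R := Real.sqrt_nonneg _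
      have hR2 : R^2 = 4*(ψ+1)/c := Real.sq_sqrt (by positivity)
      have hcR : ψ + 1 ≤ (c/4) * R^2 := by
        have hcne : c ≠ 0 := hc.ne'
        have hrw : (c/4) * (4*(ψ+1)/c) = ψ + 1 := by
          field_simp
        rw [hR2, hrw]
      set η := min 1 (ε/(2*(K*(2*R+1)+1))) with hηdef
      have hηpos : 0 < η := lt_min one_pos (by positivity)
      have hη1 : η ≤ 1 := min_le_left _ _
      have hηle : η ≤ ε/(2*(K*(2*R+1)+1)) := min_le_right _ _
      clear_value η
      clear_value R
      clear_value c
      have hΔt : Tendsto (fun t => ‖μ - μs t‖) atTop (nhds 0) := by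
        have h := tendsto_iff_norm_sub_tendsto_zero.1 hμs
        simpa [norm_sub_rev] using h
      have hev1 : ∀ᶠ t in atTop, E t < c/2 := hEt.eventually_lt_const (half_pos hc)
      have hev2 : ∀ᶠ t in atTop, E t * R^2 < ε/4 := by
        have h : Tendsto (fun t => E t * R^2) atTop (nhds 0) := by
          simpa using hEt.mul_const (R^2)
        exact h.eventually_lt_const (by positivity)
      have hev3 : ∀ᶠ t in atTop, ‖μ - μs t‖ < η := hΔt.eventually_lt_const hηpos
      filter_upwards [hev1, hev2, hev3] with t h1 h2 h3
      have key : ∀ lam ∈ S, ψ - ε/2 ≤ f (μs t) (ws t) lam := by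
        intro lam hlam
        set xt := μs t - lam with hxt
        set x := μ - lam with hx
        have hxxts : x - xt = μ - μs t := by
          rw [hx, hxt]; abel
        have hq : f (μs t) (ws t) lam
            = 1/2 * (∑ a : {a // a ∈ 𝒜}, ws t a * ((a : Fin d → ℝ) ⬝ᵥ xt)^2) := rfl
        have hqg := hqdiff (ws t) xt
        have habs := abs_le.1 hqg
        rcases le_or_gt R ‖xt‖ with hcase | hcase
        · have hb1 : c * ‖xt‖^2 ≤ g xt := hglb xt
          have hb3 : E t * ‖xt‖^2 ≤ (c/2) * ‖xt‖^2 :=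
            mul_le_mul_of_nonneg_right (le_of_lt h1) (sq_nonneg _)
          have hb2 : (c/2) * R^2 ≤ (c/2) * ‖xt‖^2 :=
            mul_le_mul_of_nonneg_left (pow_le_pow_left₀ hRnn hcase 2) (by positivity)
          rw [hq]
          nlinarith
        · have hxle : ‖x‖ ≤ R + η := by
            have hle1 : ‖x‖ ≤ ‖xt‖ + ‖x - xt‖ := by
              calc ‖x‖ = ‖xt + (x - xt)‖ := by rw [add_sub_cancel]
                _ ≤ ‖xt‖ + ‖x - xt‖ := norm_add_le _ _
            rw [hxxts] at hle1
            linarith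
          have hgd := hgdiff x xt
          rw [hxxts] at hgd
          have habs2 := abs_le.1 hgd
          have hsum : ‖x‖ + ‖xt‖ ≤ 2*R + 1 := by linarith
          have hKb : K * ‖μ - μs t‖ * (‖x‖ + ‖xt‖) ≤ ε/2 := by
            have hstep : K * ‖μ - μs t‖ * (‖x‖ + ‖xt‖) ≤ K * η * (2*R+1) :=
              mul_le_mul (mul_le_mul_of_nonneg_left h3.le hKnn) hsum
                (by positivity) (mul_nonneg hKnn hηpos.le)
            have hstep2 : K * η * (2*R+1) ≤ ε/2 := by
              have hdpos : (0:ℝ) < 2*(K*(2*R+1)+1) := by positivity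
              have h4 : (K*(2*R+1)+1) * η ≤ (K*(2*R+1)+1) * (ε/(2*(K*(2*R+1)+1))) :=
                mul_le_mul_of_nonneg_left hηle (by positivity)
              have hKRne : K*(2*R+1)+1 ≠ 0 := by positivity
              have h5 : (K*(2*R+1)+1) * (ε/(2*(K*(2*R+1)+1))) = ε/2 := by
                field_simp
              have h6 : K*(2*R+1)*η ≤ (K*(2*R+1)+1)*η :=
                mul_le_mul_of_nonneg_right (by linarith) hηpos.le
              calc K*η*(2*R+1) = K*(2*R+1)*η := by ring
                _ ≤ (K*(2*R+1)+1)*η := h6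
                _ ≤ (K*(2*R+1)+1) * (ε/(2*(K*(2*R+1)+1))) := h4
                _ = ε/2 := h5
            linarith
          have hxtb : E t * ‖xt‖^2 ≤ E t * R^2 :=
            mul_le_mul_of_nonneg_left (pow_le_pow_left₀ (norm_nonneg xt) hcase.le 2) (hEnn t)
          have hψx : ψ ≤ f μ w lam := hψle lam hlam
          have hfx : f μ w lam = 1/2 * g x := rfl
          rw [hq]
          linarith [habs.1, habs2.1, habs2.2]
      calc ψ - ε < ψ - ε/2 := by linarith
        _ ≤ psi 𝒜 (μs t) (ws t) := by
            rw [hpsi (μs t) (hμsU t)]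
            exact le_csInf (hSne.image _) fun y ⟨lam, hlam, hy⟩ => hy ▸ key lam hlam
  filter_upwards [hup, hlow] with t h1 h2
  rw [Real.dist_eq, abs_lt]
  constructor <;> linarith
end

section
/- (Maximum theorem) Define ψ*(μ') = max_{w ∈ Λ} ψ(μ', w) and C*(μ') = argmax_{w ∈ Λ} ψ(μ', w) for any parameter μ' with a unique best arm. Then: (i) C*(μ) is nonempty, compact and convex; (ii) ψ* is continuous at μ, i.e. for every ε > 0 there is an open neighborhood U of μ such that every μ' ∈ U has a unique best arm and |ψ*(μ') − ψ*(μ)| < ε; (iii) C* is upper hemicontinuous at μ: for every open set V ⊆ ℝ^𝒜 with C*(μ) ⊆ V, there exists an open neighborhood U of μ such that every μ' ∈ U has a unique best arm and C*(μ') ⊆ V. -/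
open Matrix

/-- `ψ*(μ) = max_{w ∈ Λ} ψ(μ, w)`. -/
noncomputable def psiStar {d : ℕ} (𝒜 : Finset (Fin d → ℝ)) (μ : Fin d → ℝ) : ℝ :=
  sSup (psi 𝒜 μ '' simplexOn 𝒜)

/-- `C*(μ) = argmax_{w ∈ Λ} ψ(μ, w)`. -/
def Cstar {d : ℕ} (𝒜 : Finset (Fin d → ℝ)) (μ : Fin d → ℝ) : Set ({a // a ∈ 𝒜} → ℝ) :=
  {w ∈ simplexOn 𝒜 | ∀ w' ∈ simplexOn 𝒜, psi 𝒜 μ w' ≤ psi 𝒜 μ w}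

namespace MaxThmAux

variable {d : ℕ} {𝒜 : Finset (Fin d → ℝ)}


lemma half_sq_sInf {T : Set ℝ} (hT : ∀ t ∈ T, 0 ≤ t) :
    sInf ((fun t => (1:ℝ)/2 * t^2) '' T) = 1/2 * (sInf T)^2 := by
  rcases T.eq_empty_or_nonempty with rfl | hne
  · simp [Real.sInf_empty]
  · have hbdd : BddBelow T := ⟨0, hT⟩
    have hm : 0 ≤ sInf T := Real.sInf_nonneg hT
    have hbddi : BddBelow ((fun t => (1:ℝ)/2 * t^2) '' T) := by
      refine ⟨0, ?_⟩
      rintro y ⟨t, ht, rfl⟩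
      positivity
    refine le_antisymm ?_ ?_
    · refine le_of_forall_pos_le_add fun ε hε => ?_
      have h1 : sInf T < Real.sqrt ((sInf T)^2 + 2*ε) :=
        (Real.lt_sqrt hm).mpr (by nlinarith)
      obtain ⟨t, htT, htlt⟩ := exists_lt_of_csInf_lt hne h1
      have ht0 : 0 ≤ t := hT t htT
      have ht2 : t^2 < (sInf T)^2 + 2*ε := (Real.lt_sqrt ht0).mp htlt
      calc sInf ((fun t => (1:ℝ)/2 * t^2) '' T) ≤ 1/2 * t^2 :=
            csInf_le hbddi ⟨t, htT, rfl⟩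
        _ ≤ 1/2 * (sInf T)^2 + ε := by linarith
    · refine le_csInf (hne.image _) ?_
      rintro y ⟨t, ht, rfl⟩
      have h1 : sInf T ≤ t := csInf_le hbdd ht
      have h2 : (sInf T)^2 ≤ t^2 := pow_le_pow_left₀ hm h1 2
      linarith

variable {d : ℕ} {𝒜 : Finset (Fin d → ℝ)}

lemma quad_eq (𝒜 : Finset (Fin d → ℝ)) (w : {a // a ∈ 𝒜} → ℝ) (x : Fin d → ℝ) :
    x ⬝ᵥ (armMatrix 𝒜 w).mulVec x = ∑ a : {a // a ∈ 𝒜}, w a * ((a : Fin d → ℝ) ⬝ᵥ x)^2 := by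
  have h1 : x ⬝ᵥ (armMatrix 𝒜 w).mulVec x
      = ∑ i, ∑ j, ∑ a : {a // a ∈ 𝒜}, x i * (w a * ((a:Fin d → ℝ) i * (a:Fin d → ℝ) j) * x j) := by
    simp only [armMatrix, dotProduct, Matrix.mulVec, Matrix.sum_apply, Matrix.smul_apply,
      Matrix.vecMulVec_apply, smul_eq_mul, dotProduct, Finset.sum_mul, Finset.mul_sum]
  have h2 : ∀ i : Fin d, ∑ j, ∑ a : {a // a ∈ 𝒜}, x i * (w a * ((a:Fin d → ℝ) i * (a:Fin d → ℝ) j) * x j)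
      = ∑ a : {a // a ∈ 𝒜}, ∑ j, x i * (w a * ((a:Fin d → ℝ) i * (a:Fin d → ℝ) j) * x j) :=
    fun i => Finset.sum_comm
  rw [h1]
  simp only [h2]
  rw [Finset.sum_comm]
  refine Finset.sum_congr rfl fun a _ => ?_
  rw [pow_two, dotProduct, Finset.sum_mul_sum, Finset.mul_sum]
  refine Finset.sum_congr rfl fun i _ => ?_
  rw [Finset.mul_sum]
  refine Finset.sum_congr rfl fun j _ => ?_
  ring

/-- The seminorm `x ↦ sqrt(xᵀ M(w) x)`. -/
noncomputable def Nf (𝒜 : Finset (Fin d → ℝ)) (w : {a // a ∈ 𝒜} → ℝ) (x : Fin d → ℝ) : ℝ :=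
  Real.sqrt (∑ a : {a // a ∈ 𝒜}, w a * ((a : Fin d → ℝ) ⬝ᵥ x)^2)

/-- The constant `R = ∑_{a ∈ 𝒜} ∑_i |a_i|`. -/
noncomputable def Rb (𝒜 : Finset (Fin d → ℝ)) : ℝ := ∑ a ∈ 𝒜, ∑ i, |a i|

lemma Rb_nonneg (𝒜 : Finset (Fin d → ℝ)) : 0 ≤ Rb 𝒜 := by
  refine Finset.sum_nonneg fun a _ => Finset.sum_nonneg fun i _ => abs_nonneg _

lemma qf_nonneg {w : {a // a ∈ 𝒜} → ℝ} (hw : ∀ a, 0 ≤ w a) (x : Fin d → ℝ) :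
    0 ≤ ∑ a : {a // a ∈ 𝒜}, w a * ((a : Fin d → ℝ) ⬝ᵥ x)^2 :=
  Finset.sum_nonneg fun a _ => mul_nonneg (hw a) (sq_nonneg _)

lemma Nf_nonneg (w : {a // a ∈ 𝒜} → ℝ) (x : Fin d → ℝ) : 0 ≤ Nf 𝒜 w x := Real.sqrt_nonneg _

lemma Nf_sq {w : {a // a ∈ 𝒜} → ℝ} (hw : ∀ a, 0 ≤ w a) (x : Fin d → ℝ) :
    (Nf 𝒜 w x)^2 = ∑ a : {a // a ∈ 𝒜}, w a * ((a : Fin d → ℝ) ⬝ᵥ x)^2 :=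
  Real.sq_sqrt (qf_nonneg hw x)

lemma Nf_add_le {w : {a // a ∈ 𝒜} → ℝ} (hw : ∀ a, 0 ≤ w a) (x y : Fin d → ℝ) :
    Nf 𝒜 w (x + y) ≤ Nf 𝒜 w x + Nf 𝒜 w y := by
  classical
  set g : (Fin d → ℝ) → EuclideanSpace ℝ {a // a ∈ 𝒜} :=
    fun x => WithLp.toLp 2 (fun a => Real.sqrt (w a) * ((a : Fin d → ℝ) ⬝ᵥ x)) with hg
  have hnorm : ∀ z : Fin d → ℝ, ‖g z‖ = Nf 𝒜 w z := by
    intro z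
    rw [EuclideanSpace.norm_eq]
    unfold Nf
    congr 1
    refine Finset.sum_congr rfl fun a _ => ?_
    rw [Real.norm_eq_abs, sq_abs, hg]
    simp only [PiLp.toLp_apply]
    rw [mul_pow, Real.sq_sqrt (hw a)]
  have hadd : g (x + y) = g x + g y := by
    ext a
    show Real.sqrt (w a) * ((a : Fin d → ℝ) ⬝ᵥ (x + y)) = g x a + g y a
    rw [dotProduct_add]
    show _ = Real.sqrt (w a) * _ + Real.sqrt (w a) * _
    ring
  calc Nf 𝒜 w (x + y) = ‖g (x + y)‖ := (hnorm _).symm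
    _ = ‖g x + g y‖ := by rw [hadd]
    _ ≤ ‖g x‖ + ‖g y‖ := norm_add_le _ _
    _ = Nf 𝒜 w x + Nf 𝒜 w y := by rw [hnorm, hnorm]

lemma dot_le (a : Fin d → ℝ) (ha : a ∈ 𝒜) (x : Fin d → ℝ) : |a ⬝ᵥ x| ≤ Rb 𝒜 * ‖x‖ := by
  have h1 : |a ⬝ᵥ x| ≤ ∑ i, |a i| * ‖x‖ := by
    refine le_trans (Finset.abs_sum_le_sum_abs _ _) (Finset.sum_le_sum fun i _ => ?_)
    rw [abs_mul]
    exact mul_le_mul_of_nonneg_left ((Real.norm_eq_abs (x i)) ▸ norm_le_pi_norm x i) (abs_nonneg _)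
  have h2 : ∑ i, |a i| ≤ Rb 𝒜 :=
    Finset.single_le_sum (f := fun a : Fin d → ℝ => ∑ i, |a i|)
      (fun b _ => Finset.sum_nonneg fun i _ => abs_nonneg _) ha
  calc |a ⬝ᵥ x| ≤ ∑ i, |a i| * ‖x‖ := h1
    _ = (∑ i, |a i|) * ‖x‖ := by rw [Finset.sum_mul]
    _ ≤ Rb 𝒜 * ‖x‖ := mul_le_mul_of_nonneg_right h2 (norm_nonneg _)

lemma Nf_le {w : {a // a ∈ 𝒜} → ℝ} (hw : ∀ a, 0 ≤ w a) (hsum : ∑ a, w a = 1)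
    (x : Fin d → ℝ) : Nf 𝒜 w x ≤ Rb 𝒜 * ‖x‖ := by
  have hR : 0 ≤ Rb 𝒜 * ‖x‖ := mul_nonneg (Rb_nonneg 𝒜) (norm_nonneg _)
  have h1 : ∑ a : {a // a ∈ 𝒜}, w a * ((a : Fin d → ℝ) ⬝ᵥ x)^2 ≤ (Rb 𝒜 * ‖x‖)^2 := by
    calc ∑ a : {a // a ∈ 𝒜}, w a * ((a : Fin d → ℝ) ⬝ᵥ x)^2
        ≤ ∑ a : {a // a ∈ 𝒜}, w a * (Rb 𝒜 * ‖x‖)^2 := by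
          refine Finset.sum_le_sum fun a _ => mul_le_mul_of_nonneg_left ?_ (hw a)
          rw [← sq_abs]
          exact pow_le_pow_left₀ (abs_nonneg _) (dot_le (a : Fin d → ℝ) a.2 x) 2
      _ = (Rb 𝒜 * ‖x‖)^2 := by rw [← Finset.sum_mul, hsum, one_mul]
  calc Nf 𝒜 w x ≤ Real.sqrt ((Rb 𝒜 * ‖x‖)^2) := Real.sqrt_le_sqrt h1
    _ = Rb 𝒜 * ‖x‖ := Real.sqrt_sq hR


/-- `φ(ν, w) = inf_{λ ∈ S} N_w(ν − λ)`. -/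
noncomputable def phiF (𝒜 : Finset (Fin d → ℝ)) (w : {a // a ∈ 𝒜} → ℝ)
    (S : Set (Fin d → ℝ)) (ν : Fin d → ℝ) : ℝ :=
  sInf ((fun lam => Nf 𝒜 w (ν - lam)) '' S)

lemma phi_bddBelow (w : {a // a ∈ 𝒜} → ℝ) (S : Set (Fin d → ℝ)) (ν : Fin d → ℝ) :
    BddBelow ((fun lam => Nf 𝒜 w (ν - lam)) '' S) := by
  refine ⟨0, ?_⟩; rintro y ⟨l, _, rfl⟩; exact Nf_nonneg _ _

lemma phiF_nonneg (w : {a // a ∈ 𝒜} → ℝ) (S : Set (Fin d → ℝ)) (ν : Fin d → ℝ) :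
    0 ≤ phiF 𝒜 w S ν := by
  refine Real.sInf_nonneg ?_; rintro y ⟨l, _, rfl⟩; exact Nf_nonneg _ _

lemma phiF_le (w : {a // a ∈ 𝒜} → ℝ) {S : Set (Fin d → ℝ)} (ν : Fin d → ℝ)
    {lam : Fin d → ℝ} (hlam : lam ∈ S) : phiF 𝒜 w S ν ≤ Nf 𝒜 w (ν - lam) :=
  csInf_le (phi_bddBelow w S ν) ⟨lam, hlam, rfl⟩

lemma psi_eq_phi {w : {a // a ∈ 𝒜} → ℝ} (hw : ∀ a, 0 ≤ w a)
    (S : Set (Fin d → ℝ)) (ν : Fin d → ℝ) :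
    sInf ((fun lam => (1:ℝ)/2 * ((ν - lam) ⬝ᵥ (armMatrix 𝒜 w).mulVec (ν - lam))) '' S)
      = 1/2 * (phiF 𝒜 w S ν)^2 := by
  have hfun : (fun lam => (1:ℝ)/2 * ((ν - lam) ⬝ᵥ (armMatrix 𝒜 w).mulVec (ν - lam)))
      = (fun t => (1:ℝ)/2 * t^2) ∘ (fun lam => Nf 𝒜 w (ν - lam)) := by
    funext lam
    show _ = (1:ℝ)/2 * (Nf 𝒜 w (ν - lam))^2
    rw [quad_eq, Nf_sq hw]
  rw [hfun, Set.image_comp, half_sq_sInf]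
  · rfl
  · rintro t ⟨l, _, rfl⟩; exact Nf_nonneg _ _

lemma phiF_diff_le {w : {a // a ∈ 𝒜} → ℝ} (hw : ∀ a, 0 ≤ w a) (hsum : ∑ a, w a = 1)
    (S : Set (Fin d → ℝ)) (ν ν' : Fin d → ℝ) :
    phiF 𝒜 w S ν ≤ phiF 𝒜 w S ν' + Rb 𝒜 * ‖ν - ν'‖ := by
  rcases S.eq_empty_or_nonempty with rfl | hne
  · simp only [phiF, Set.image_empty, Real.sInf_empty, zero_add]
    exact mul_nonneg (Rb_nonneg 𝒜) (norm_nonneg _)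
  · have key : ∀ y ∈ (fun lam => Nf 𝒜 w (ν' - lam)) '' S, phiF 𝒜 w S ν - Rb 𝒜 * ‖ν - ν'‖ ≤ y := by
      rintro y ⟨lam, hlam, rfl⟩
      have h1 : phiF 𝒜 w S ν ≤ Nf 𝒜 w (ν - lam) := phiF_le w ν hlam
      have h2 : Nf 𝒜 w (ν - lam) ≤ Nf 𝒜 w (ν - ν') + Nf 𝒜 w (ν' - lam) := by
        have : ν - lam = (ν - ν') + (ν' - lam) := by abel
        rw [this]; exact Nf_add_le hw _ _
      have h3 : Nf 𝒜 w (ν - ν') ≤ Rb 𝒜 * ‖ν - ν'‖ := Nf_le hw hsum _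
      linarith
    have := le_csInf (hne.image _) key
    have h4 : phiF 𝒜 w S ν - Rb 𝒜 * ‖ν - ν'‖ ≤ phiF 𝒜 w S ν' := this
    linarith

lemma phiF_abs_diff {w : {a // a ∈ 𝒜} → ℝ} (hw : ∀ a, 0 ≤ w a) (hsum : ∑ a, w a = 1)
    (S : Set (Fin d → ℝ)) (ν ν' : Fin d → ℝ) :
    |phiF 𝒜 w S ν - phiF 𝒜 w S ν'| ≤ Rb 𝒜 * ‖ν - ν'‖ := by
  rw [abs_sub_le_iff]
  constructor
  · linarith [phiF_diff_le hw hsum S ν ν']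
  · have := phiF_diff_le hw hsum S ν' ν
    rw [norm_sub_rev] at this
    linarith

lemma bestArm_unique {ν b c : Fin d → ℝ} (h1 : IsBestArm 𝒜 ν b) (h2 : IsBestArm 𝒜 ν c) :
    b = c := by
  by_contra hne
  have hb := h2.2 b h1.1 hne
  have hc := h1.2 c h2.1 (Ne.symm hne)
  linarith

lemma bestArm_eq {ν b : Fin d → ℝ} (h : IsBestArm 𝒜 ν b) : bestArm 𝒜 ν = b := by
  have hex : ∃ a, IsBestArm 𝒜 ν a := ⟨b, h⟩
  unfold bestArm
  rw [dif_pos hex]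
  exact bestArm_unique hex.choose_spec h

lemma simplex_nonempty (h𝒜 : 𝒜.Nonempty) : (simplexOn 𝒜).Nonempty := by
  classical
  have hcard : 0 < 𝒜.card := Finset.card_pos.mpr h𝒜
  have hcardR : (0:ℝ) < (𝒜.card : ℝ) := by exact_mod_cast hcard
  have h1 : (1:ℝ) ≤ (𝒜.card : ℝ) := by exact_mod_cast hcard
  refine ⟨fun _ => (𝒜.card : ℝ)⁻¹, ⟨fun a => ⟨by positivity, ?_⟩, ?_⟩⟩
  · exact inv_le_one_of_one_le₀ h1
  · rw [Finset.sum_const, Finset.card_univ, Fintype.card_coe, nsmul_eq_mul]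
    exact mul_inv_cancel₀ (ne_of_gt hcardR)

lemma simplex_isClosed : IsClosed (simplexOn 𝒜) := by
  have heq : simplexOn 𝒜
      = (⋂ a : {a // a ∈ 𝒜}, ({w : {a // a ∈ 𝒜} → ℝ | 0 ≤ w a} ∩ {w | w a ≤ 1}))
        ∩ {w : {a // a ∈ 𝒜} → ℝ | ∑ a, w a = 1} := by
    ext w
    simp only [simplexOn, Set.mem_inter_iff, Set.mem_iInter, Set.mem_setOf_eq]
  rw [heq]
  refine IsClosed.inter (isClosed_iInter fun a => IsClosed.inter ?_ ?_) ?_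
  · exact isClosed_le continuous_const (continuous_apply a)
  · exact isClosed_le (continuous_apply a) continuous_const
  · exact isClosed_eq (continuous_finset_sum _ fun a _ => continuous_apply a) continuous_const

lemma simplex_isCompact : IsCompact (simplexOn 𝒜) := by
  refine Metric.isCompact_of_isClosed_isBounded simplex_isClosed ?_
  refine (Metric.isBounded_closedBall (x := (0 : {a // a ∈ 𝒜} → ℝ)) (r := 1)).subset ?_
  intro w hw
  rw [Metric.mem_closedBall, dist_zero_right]
  refine pi_norm_le_iff_of_nonneg zero_le_one |>.mpr fun a => ?_
  rw [Real.norm_eq_abs]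
  exact abs_le.mpr ⟨by linarith [(hw.1 a).1], (hw.1 a).2⟩

lemma simplex_convex : Convex ℝ (simplexOn 𝒜) := by
  rintro w hw v hv s t hs ht hst
  refine ⟨fun a => ⟨?_, ?_⟩, ?_⟩
  · have := (hw.1 a).1; have := (hv.1 a).1
    simp only [Pi.add_apply, Pi.smul_apply, smul_eq_mul]
    positivity
  · simp only [Pi.add_apply, Pi.smul_apply, smul_eq_mul]
    have h1 := (hw.1 a).2; have h2 := (hv.1 a).2
    have := (hw.1 a).1; have := (hv.1 a).1
    nlinarith
  · simp only [Pi.add_apply, Pi.smul_apply, smul_eq_mul]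
    rw [Finset.sum_add_distrib, ← Finset.mul_sum, ← Finset.mul_sum, hw.2, hv.2]
    linarith

lemma F_continuous (x : Fin d → ℝ) :
    Continuous fun w : {a // a ∈ 𝒜} → ℝ => (1:ℝ)/2 * (x ⬝ᵥ (armMatrix 𝒜 w).mulVec x) := by
  simp only [quad_eq]
  exact continuous_const.mul
    (continuous_finset_sum _ fun a _ => (continuous_apply a).mul continuous_const)


end MaxThmAux

open MaxThmAux in
/-- (Maximum theorem) (i) `C*(μ)` is nonempty, compact and convex; (ii) `ψ*` is continuous
at `μ` (with unique best arms nearby); (iii) `C*` is upper hemicontinuous at `μ`. -/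
theorem maximum_theorem {d : ℕ} (𝒜 : Finset (Fin d → ℝ))
    (hspan : Submodule.span ℝ (𝒜 : Set (Fin d → ℝ)) = ⊤)
    (μ : Fin d → ℝ) (hstar : ∃! astar, IsBestArm 𝒜 μ astar) :
    ((Cstar 𝒜 μ).Nonempty ∧ IsCompact (Cstar 𝒜 μ) ∧ Convex ℝ (Cstar 𝒜 μ)) ∧
    (∀ ε : ℝ, 0 < ε → ∃ U : Set (Fin d → ℝ), IsOpen U ∧ μ ∈ U ∧
      ∀ μ' ∈ U, (∃! astar', IsBestArm 𝒜 μ' astar') ∧ |psiStar 𝒜 μ' - psiStar 𝒜 μ| < ε) ∧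
    (∀ V : Set ({a // a ∈ 𝒜} → ℝ), IsOpen V → Cstar 𝒜 μ ⊆ V →
      ∃ U : Set (Fin d → ℝ), IsOpen U ∧ μ ∈ U ∧
        ∀ μ' ∈ U, (∃! astar', IsBestArm 𝒜 μ' astar') ∧ Cstar 𝒜 μ' ⊆ V) := by
  classical
  obtain ⟨astar, hastar, -⟩ := hstar
  have h𝒜ne : 𝒜.Nonempty := ⟨astar, hastar.1⟩
  set B : Set (Fin d → ℝ) := badSet 𝒜 μ with hBdef
  -- the neighborhood of parameters with the same best arm
  set U₀ : Set (Fin d → ℝ) := ⋂ a ∈ 𝒜, {ν | a ≠ astar → ν ⬝ᵥ a < ν ⬝ᵥ astar} with hU₀def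
  have hdotcont : ∀ b : Fin d → ℝ, Continuous fun ν : Fin d → ℝ => ν ⬝ᵥ b := by
    intro b
    simp only [dotProduct]
    exact continuous_finset_sum _ fun i _ => (continuous_apply i).mul continuous_const
  have hU₀open : IsOpen U₀ := by
    refine isOpen_biInter_finset fun a ha => ?_
    by_cases hne : a = astar
    · simp [hne]
    · have : {ν : Fin d → ℝ | a ≠ astar → ν ⬝ᵥ a < ν ⬝ᵥ astar}
          = {ν : Fin d → ℝ | ν ⬝ᵥ a < ν ⬝ᵥ astar} := by
        ext ν; simp [hne]
      rw [this]
      exact isOpen_lt (hdotcont a) (hdotcont astar)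
  have hμU₀ : μ ∈ U₀ := by
    refine Set.mem_iInter₂.mpr fun a ha => fun hne => hastar.2 a ha hne
  have hUbest : ∀ ν ∈ U₀, IsBestArm 𝒜 ν astar := by
    intro ν hν
    exact ⟨hastar.1, fun a ha hne => (Set.mem_iInter₂.mp hν a ha) hne⟩
  have hUuniq : ∀ ν ∈ U₀, ∃! b, IsBestArm 𝒜 ν b := by
    intro ν hν
    exact ⟨astar, hUbest ν hν, fun b hb => bestArm_unique hb (hUbest ν hν)⟩
  have hUbad : ∀ ν ∈ U₀, badSet 𝒜 ν = B := by
    intro ν hν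
    rw [hBdef]
    unfold badSet
    rw [bestArm_eq (hUbest ν hν), bestArm_eq hastar]
  have hpsi : ∀ ν ∈ U₀, ∀ w, psi 𝒜 ν w
      = sInf ((fun lam => (1:ℝ)/2 * ((ν - lam) ⬝ᵥ (armMatrix 𝒜 w).mulVec (ν - lam))) '' B) := by
    intro ν hν w
    unfold psi
    rw [hUbad ν hν]
  have hpsiphi : ∀ ν ∈ U₀, ∀ w ∈ simplexOn 𝒜, psi 𝒜 ν w = 1/2 * (phiF 𝒜 w B ν)^2 := by
    intro ν hν w hw
    rw [hpsi ν hν w]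
    exact psi_eq_phi (fun a => (hw.1 a).1) B ν
  -- bounds on psi over the simplex
  have hFnonneg : ∀ (lam : Fin d → ℝ), ∀ w ∈ simplexOn 𝒜,
      0 ≤ (1:ℝ)/2 * ((μ - lam) ⬝ᵥ (armMatrix 𝒜 w).mulVec (μ - lam)) := by
    intro lam w hw
    rw [quad_eq]
    have : 0 ≤ ∑ a : {a // a ∈ 𝒜}, w a * ((a : Fin d → ℝ) ⬝ᵥ (μ - lam))^2 :=
      Finset.sum_nonneg fun a _ => mul_nonneg (hw.1 a).1 (sq_nonneg _)
    linarith
  have hpsi_le_F : ∀ w ∈ simplexOn 𝒜, ∀ lam ∈ B,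
      psi 𝒜 μ w ≤ (1:ℝ)/2 * ((μ - lam) ⬝ᵥ (armMatrix 𝒜 w).mulVec (μ - lam)) := by
    intro w hw lam hlam
    rw [hpsi μ hμU₀ w]
    refine csInf_le ⟨0, ?_⟩ ⟨lam, hlam, rfl⟩
    rintro y ⟨l, hl, rfl⟩
    exact hFnonneg l w hw
  -- concavity of psi in w
  have hconcave : ∀ w₁ ∈ simplexOn 𝒜, ∀ w₂ ∈ simplexOn 𝒜, ∀ s t : ℝ, 0 ≤ s → 0 ≤ t →
      s + t = 1 → s * psi 𝒜 μ w₁ + t * psi 𝒜 μ w₂ ≤ psi 𝒜 μ (s • w₁ + t • w₂) := by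
    intro w₁ hw₁ w₂ hw₂ s t hs ht hst
    rcases B.eq_empty_or_nonempty with hBe | hBne
    · rw [hpsi μ hμU₀ w₁, hpsi μ hμU₀ w₂, hpsi μ hμU₀ (s • w₁ + t • w₂), hBe]
      simp [Real.sInf_empty]
    · rw [hpsi μ hμU₀ (s • w₁ + t • w₂)]
      refine le_csInf (hBne.image _) ?_
      rintro y ⟨lam, hlam, rfl⟩
      have hlin : (1:ℝ)/2 * ((μ - lam) ⬝ᵥ (armMatrix 𝒜 (s • w₁ + t • w₂)).mulVec (μ - lam))
          = s * ((1:ℝ)/2 * ((μ - lam) ⬝ᵥ (armMatrix 𝒜 w₁).mulVec (μ - lam)))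
            + t * ((1:ℝ)/2 * ((μ - lam) ⬝ᵥ (armMatrix 𝒜 w₂).mulVec (μ - lam))) := by
        simp only [quad_eq, Finset.mul_sum, ← Finset.sum_add_distrib]
        refine Finset.sum_congr rfl fun a _ => ?_
        simp only [Pi.add_apply, Pi.smul_apply, smul_eq_mul]
        ring
      have h1 := hpsi_le_F w₁ hw₁ lam hlam
      have h2 := hpsi_le_F w₂ hw₂ lam hlam
      have h3 := mul_le_mul_of_nonneg_left h1 hs
      have h4 := mul_le_mul_of_nonneg_left h2 ht
      have h5 : s * psi 𝒜 μ w₁ + t * psi 𝒜 μ w₂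
          ≤ s * ((1:ℝ)/2 * ((μ - lam) ⬝ᵥ (armMatrix 𝒜 w₁).mulVec (μ - lam)))
            + t * ((1:ℝ)/2 * ((μ - lam) ⬝ᵥ (armMatrix 𝒜 w₂).mulVec (μ - lam))) := by linarith
      exact h5.trans_eq hlin.symm
  -- convexity of Cstar (valid in all cases)
  have hCconvex : Convex ℝ (Cstar 𝒜 μ) := by
    rintro w₁ ⟨hw₁s, hw₁m⟩ w₂ ⟨hw₂s, hw₂m⟩ s t hs ht hst
    have hmem : s • w₁ + t • w₂ ∈ simplexOn 𝒜 := simplex_convex hw₁s hw₂s hs ht hst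
    refine ⟨hmem, fun w' hw' => ?_⟩
    have h1 := hw₁m w' hw'
    have h2 := hw₂m w' hw'
    have h3 := hconcave w₁ hw₁s w₂ hw₂s s t hs ht hst
    have h4 := mul_le_mul_of_nonneg_left h1 hs
    have h5 := mul_le_mul_of_nonneg_left h2 ht
    have e : s * psi 𝒜 μ w' + t * psi 𝒜 μ w' = psi 𝒜 μ w' := by rw [← add_mul, hst, one_mul]
    linarith
  rcases B.eq_empty_or_nonempty with hBe | hBne
  -- degenerate case : no bad parameters, psi ≡ 0
  · have hzero : ∀ ν ∈ U₀, ∀ w, psi 𝒜 ν w = 0 := by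
      intro ν hν w
      rw [hpsi ν hν w, hBe]
      simp [Real.sInf_empty]
    have hCeq : ∀ ν ∈ U₀, Cstar 𝒜 ν = simplexOn 𝒜 := by
      intro ν hν
      ext w
      constructor
      · exact fun h => h.1
      · intro hw
        exact ⟨hw, fun w' hw' => by rw [hzero ν hν w', hzero ν hν w]⟩
    have hpsiStar0 : ∀ ν ∈ U₀, psiStar 𝒜 ν = 0 := by
      intro ν hν
      unfold psiStar
      have himg : psi 𝒜 ν '' simplexOn 𝒜 = {0} := by
        have h1 : psi 𝒜 ν '' simplexOn 𝒜 = (fun _ => (0:ℝ)) '' simplexOn 𝒜 :=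
          Set.image_congr fun w _ => hzero ν hν w
        rw [h1, Set.Nonempty.image_const (simplex_nonempty h𝒜ne)]
      rw [himg, csSup_singleton]
    refine ⟨⟨?_, ?_, hCconvex⟩, ?_, ?_⟩
    · rw [hCeq μ hμU₀]; exact simplex_nonempty h𝒜ne
    · rw [hCeq μ hμU₀]; exact simplex_isCompact
    · intro ε hε
      refine ⟨U₀, hU₀open, hμU₀, fun μ' hμ' => ⟨hUuniq μ' hμ', ?_⟩⟩
      rw [hpsiStar0 μ' hμ', hpsiStar0 μ hμU₀]
      simpa using hε
    · intro V hV hCV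
      refine ⟨U₀, hU₀open, hμU₀, fun μ' hμ' => ⟨hUuniq μ' hμ', ?_⟩⟩
      rw [hCeq μ' hμ']
      rw [hCeq μ hμU₀] at hCV
      exact hCV
  -- main case : B nonempty
  · obtain ⟨lam0, hlam0⟩ := hBne
    have hBne : B.Nonempty := ⟨lam0, hlam0⟩
    set Cb : ℝ := Rb 𝒜 * ‖μ - lam0‖ with hCbdef
    have hCb0 : 0 ≤ Cb := mul_nonneg (Rb_nonneg 𝒜) (norm_nonneg _)
    have hphibound : ∀ w ∈ simplexOn 𝒜, phiF 𝒜 w B μ ≤ Cb := by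
      intro w hw
      exact le_trans (phiF_le w μ hlam0) (Nf_le (fun a => (hw.1 a).1) hw.2 _)
    -- uniform bound on |psi ν - psi μ| over the simplex
    have hpsidiff : ∀ δ : ℝ, 0 < δ → ∀ ν ∈ U₀, ‖ν - μ‖ ≤ δ → ∀ w ∈ simplexOn 𝒜,
        |psi 𝒜 ν w - psi 𝒜 μ w| ≤ 1/2 * (Rb 𝒜 * δ) * (2*Cb + Rb 𝒜 * δ) := by
      intro δ hδ ν hν hd w hw
      have hw0 : ∀ a, 0 ≤ w a := fun a => (hw.1 a).1
      have ha0 : 0 ≤ phiF 𝒜 w B ν := phiF_nonneg w B ν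
      have hb0 : 0 ≤ phiF 𝒜 w B μ := phiF_nonneg w B μ
      have hbCb : phiF 𝒜 w B μ ≤ Cb := hphibound w hw
      have habs : |phiF 𝒜 w B ν - phiF 𝒜 w B μ| ≤ Rb 𝒜 * δ := by
        refine le_trans (phiF_abs_diff hw0 hw.2 B ν μ) ?_
        exact mul_le_mul_of_nonneg_left hd (Rb_nonneg 𝒜)
      obtain ⟨hab1, hab2⟩ := abs_le.mp habs
      rw [hpsiphi ν hν w hw, hpsiphi μ hμU₀ w hw]
      rw [abs_le]
      constructor <;> nlinarith [ha0, hb0, hbCb, Rb_nonneg 𝒜]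
    have hpsibound : ∀ ν ∈ U₀, ∀ w ∈ simplexOn 𝒜,
        psi 𝒜 ν w ≤ 1/2 * (Cb + Rb 𝒜 * ‖ν - μ‖)^2 := by
      intro ν hν w hw
      have h1 : phiF 𝒜 w B ν ≤ Cb + Rb 𝒜 * ‖ν - μ‖ :=
        le_trans (phiF_diff_le (fun a => (hw.1 a).1) hw.2 B ν μ)
          (by linarith [hphibound w hw])
      have h0 : 0 ≤ phiF 𝒜 w B ν := phiF_nonneg w B ν
      rw [hpsiphi ν hν w hw]
      nlinarith
    have hbddAbove : ∀ ν ∈ U₀, BddAbove (psi 𝒜 ν '' simplexOn 𝒜) := by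
      intro ν hν
      refine ⟨1/2 * (Cb + Rb 𝒜 * ‖ν - μ‖)^2, ?_⟩
      rintro y ⟨w, hw, rfl⟩
      exact hpsibound ν hν w hw
    have himgne : ∀ ν : Fin d → ℝ, (psi 𝒜 ν '' simplexOn 𝒜).Nonempty :=
      fun ν => (simplex_nonempty h𝒜ne).image _
    -- part (i) : nonemptiness and compactness via closed superlevel sets
    have hZiff : ∀ w ∈ simplexOn 𝒜, ∀ c : ℝ,
        ((∀ lam ∈ B, c ≤ (1:ℝ)/2 * ((μ - lam) ⬝ᵥ (armMatrix 𝒜 w).mulVec (μ - lam)))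
          ↔ c ≤ psi 𝒜 μ w) := by
      intro w hw c
      constructor
      · intro h
        rw [hpsi μ hμU₀ w]
        refine le_csInf (hBne.image _) ?_
        rintro y ⟨lam, hlam, rfl⟩
        exact h lam hlam
      · intro h lam hlam
        exact le_trans h (hpsi_le_F w hw lam hlam)
    set t : {w' // w' ∈ simplexOn 𝒜} → Set ({a // a ∈ 𝒜} → ℝ) := fun w' =>
      {w | ∀ lam ∈ B, psi 𝒜 μ w'.1 ≤ (1:ℝ)/2 * ((μ - lam) ⬝ᵥ (armMatrix 𝒜 w).mulVec (μ - lam))}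
      with htdef
    have htclosed : ∀ w', IsClosed (t w') := by
      intro w'
      have : t w' = ⋂ lam ∈ B, {w | psi 𝒜 μ w'.1
          ≤ (1:ℝ)/2 * ((μ - lam) ⬝ᵥ (armMatrix 𝒜 w).mulVec (μ - lam))} := by
        ext w; simp [htdef, Set.mem_iInter]
      rw [this]
      exact isClosed_biInter fun lam _ =>
        isClosed_le continuous_const (F_continuous (μ - lam))
    have hCeq : Cstar 𝒜 μ = simplexOn 𝒜 ∩ ⋂ w', t w' := by
      ext w
      simp only [Cstar, Set.mem_setOf_eq, Set.mem_inter_iff, Set.mem_iInter, htdef]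
      constructor
      · rintro ⟨hws, hmax⟩
        exact ⟨hws, fun w' lam hlam => (hZiff w hws _).mpr (hmax w'.1 w'.2) lam hlam⟩
      · rintro ⟨hws, hall⟩
        exact ⟨hws, fun w' hw' => (hZiff w hws _).mp (hall ⟨w', hw'⟩)⟩
    have hCne : (Cstar 𝒜 μ).Nonempty := by
      rw [hCeq]
      refine simplex_isCompact.inter_iInter_nonempty t htclosed fun u => ?_
      rcases u.eq_empty_or_nonempty with rfl | hu
      · simpa using simplex_nonempty h𝒜ne
      · obtain ⟨w₀, hw₀u, hmax⟩ := u.exists_max_image (fun w' => psi 𝒜 μ w'.1) hu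
        refine ⟨w₀.1, w₀.2, ?_⟩
        refine Set.mem_iInter₂.mpr fun w' hw' => ?_
        exact fun lam hlam => (hZiff w₀.1 w₀.2 _).mpr (hmax w' hw') lam hlam
    have hCcompact : IsCompact (Cstar 𝒜 μ) := by
      rw [hCeq]
      exact simplex_isCompact.inter_right (isClosed_iInter htclosed)
    obtain ⟨w₁, hw₁C⟩ := hCne
    have hw₁s : w₁ ∈ simplexOn 𝒜 := hw₁C.1
    have hpsiw₁ : psi 𝒜 μ w₁ = psiStar 𝒜 μ := by
      refine le_antisymm (le_csSup (hbddAbove μ hμU₀) ⟨w₁, hw₁s, rfl⟩) ?_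
      refine csSup_le (himgne μ) ?_
      rintro y ⟨w, hw, rfl⟩
      exact hw₁C.2 w hw
    -- choice of δ given a target bound
    have hδchoice : ∀ e : ℝ, 0 < e → ∃ δ : ℝ, 0 < δ ∧
        1/2 * (Rb 𝒜 * δ) * (2*Cb + Rb 𝒜 * δ) ≤ e := by
      intro e he
      set Kc : ℝ := Rb 𝒜 * (2*Cb + Rb 𝒜) + 1 with hKc
      have hKcpos : 0 < Kc := by nlinarith [Rb_nonneg 𝒜, hCb0]
      set δ : ℝ := min 1 (e / Kc) with hδdef
      refine ⟨δ, lt_min one_pos (div_pos he hKcpos), ?_⟩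
      have h1 : δ ≤ 1 := min_le_left _ _
      have h2 : δ ≤ e / Kc := min_le_right _ _
      have h3 : 0 < δ := lt_min one_pos (div_pos he hKcpos)
      have h4 : δ * Kc ≤ e := by
        calc δ * Kc ≤ (e / Kc) * Kc := mul_le_mul_of_nonneg_right h2 hKcpos.le
          _ = e := div_mul_cancel₀ e (ne_of_gt hKcpos)
      have hR := Rb_nonneg 𝒜
      have hδRb : Rb 𝒜 * δ ≤ Rb 𝒜 := by nlinarith
      calc 1/2 * (Rb 𝒜 * δ) * (2*Cb + Rb 𝒜 * δ)
          ≤ 1/2 * (Rb 𝒜 * δ) * (2*Cb + Rb 𝒜) := by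
            refine mul_le_mul_of_nonneg_left (by linarith) ?_
            have : 0 ≤ Rb 𝒜 * δ := mul_nonneg hR h3.le
            linarith
        _ = 1/2 * δ * (Rb 𝒜 * (2*Cb + Rb 𝒜)) := by ring
        _ ≤ 1/2 * δ * Kc := by
            refine mul_le_mul_of_nonneg_left ?_ (by linarith)
            rw [hKc]; linarith
        _ ≤ 1/2 * e := by nlinarith
        _ ≤ e := by linarith
    refine ⟨⟨⟨w₁, hw₁C⟩, hCcompact, hCconvex⟩, ?_, ?_⟩
    -- part (ii)
    · intro ε hε
      obtain ⟨δ, hδpos, hδbound⟩ := hδchoice (ε/2) (by linarith)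
      refine ⟨U₀ ∩ Metric.ball μ δ, hU₀open.inter Metric.isOpen_ball,
        ⟨hμU₀, Metric.mem_ball_self hδpos⟩, ?_⟩
      rintro μ' ⟨hμ'U₀, hμ'ball⟩
      refine ⟨hUuniq μ' hμ'U₀, ?_⟩
      have hd : ‖μ' - μ‖ ≤ δ := by
        rw [← dist_eq_norm]
        exact le_of_lt (Metric.mem_ball.mp hμ'ball)
      have hdiff := hpsidiff δ hδpos μ' hμ'U₀ hd
      have h1 : psiStar 𝒜 μ' ≤ psiStar 𝒜 μ + ε/2 := by
        refine csSup_le (himgne μ') ?_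
        rintro y ⟨w, hw, rfl⟩
        have := abs_le.mp (hdiff w hw)
        have h2 : psi 𝒜 μ w ≤ psiStar 𝒜 μ := le_csSup (hbddAbove μ hμU₀) ⟨w, hw, rfl⟩
        linarith [hδbound]
      have h2 : psiStar 𝒜 μ ≤ psiStar 𝒜 μ' + ε/2 := by
        refine csSup_le (himgne μ) ?_
        rintro y ⟨w, hw, rfl⟩
        have := abs_le.mp (hdiff w hw)
        have h3 : psi 𝒜 μ' w ≤ psiStar 𝒜 μ' := le_csSup (hbddAbove μ' hμ'U₀) ⟨w, hw, rfl⟩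
        linarith [hδbound]
      rw [abs_sub_lt_iff]
      constructor <;> linarith
    -- part (iii)
    · intro V hV hCV
      set K : Set ({a // a ∈ 𝒜} → ℝ) := simplexOn 𝒜 ∩ Vᶜ with hKdef
      have hKcomp : IsCompact K := simplex_isCompact.inter_right hV.isClosed_compl
      rcases K.eq_empty_or_nonempty with hKe | hKne
      · refine ⟨U₀, hU₀open, hμU₀, fun μ' hμ' => ⟨hUuniq μ' hμ', fun w hw => ?_⟩⟩
        by_contra hwV
        have : w ∈ K := ⟨hw.1, hwV⟩
        rw [hKe] at this
        exact this
      · set Ms : ℝ := psiStar 𝒜 μ with hMsdef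
        have hwlt : ∀ w ∈ K, psi 𝒜 μ w < Ms := by
          rintro w ⟨hws, hwV⟩
          have hwnC : w ∉ Cstar 𝒜 μ := fun h => hwV (hCV h)
          have : ¬ (∀ w' ∈ simplexOn 𝒜, psi 𝒜 μ w' ≤ psi 𝒜 μ w) := by
            intro h
            exact hwnC ⟨hws, h⟩
          push_neg at this
          obtain ⟨w', hw's, hw'gt⟩ := this
          exact lt_of_lt_of_le hw'gt (le_csSup (hbddAbove μ hμU₀) ⟨w', hw's, rfl⟩)
        -- open cover of K
        set O : {p : (Fin d → ℝ) × ℝ // p.1 ∈ B ∧ p.2 < Ms} → Set ({a // a ∈ 𝒜} → ℝ) :=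
          fun p => {w | (1:ℝ)/2 * ((μ - p.1.1) ⬝ᵥ (armMatrix 𝒜 w).mulVec (μ - p.1.1)) < p.1.2}
          with hOdef
        have hOopen : ∀ p, IsOpen (O p) := fun p =>
          isOpen_lt (F_continuous (μ - p.1.1)) continuous_const
        have hKO : K ⊆ ⋃ p, O p := by
          intro w hw
          obtain ⟨c, hc1, hc2⟩ := exists_between (hwlt w hw)
          rw [hpsi μ hμU₀ w] at hc1
          obtain ⟨y, ⟨lam, hlam, rfl⟩, hy⟩ := exists_lt_of_csInf_lt (hBne.image _) hc1
          exact Set.mem_iUnion.mpr ⟨⟨(lam, c), hlam, hc2⟩, hy⟩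
        obtain ⟨u, hu⟩ := hKcomp.elim_finite_subcover O hOopen hKO
        have hune : u.Nonempty := by
          obtain ⟨w₀, hw₀⟩ := hKne
          have := hu hw₀
          rw [Set.mem_iUnion₂] at this
          obtain ⟨p, hpu, -⟩ := this
          exact ⟨p, hpu⟩
        set cmax : ℝ := u.sup' hune (fun p => p.1.2) with hcmax
        have hcmaxlt : cmax < Ms := Finset.sup'_lt_iff hune |>.mpr fun p _ => p.2.2
        set η : ℝ := Ms - cmax with hη
        have hηpos : 0 < η := by simp [hη]; linarith
        obtain ⟨δ, hδpos, hδbound⟩ := hδchoice (η/3) (by linarith)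
        refine ⟨U₀ ∩ Metric.ball μ δ, hU₀open.inter Metric.isOpen_ball,
          ⟨hμU₀, Metric.mem_ball_self hδpos⟩, ?_⟩
        rintro μ' ⟨hμ'U₀, hμ'ball⟩
        refine ⟨hUuniq μ' hμ'U₀, ?_⟩
        have hd : ‖μ' - μ‖ ≤ δ := by
          rw [← dist_eq_norm]
          exact le_of_lt (Metric.mem_ball.mp hμ'ball)
        have hdiff := hpsidiff δ hδpos μ' hμ'U₀ hd
        rintro w₀ ⟨hw₀s, hw₀max⟩
        by_contra hw₀V
        have hw₀K : w₀ ∈ K := ⟨hw₀s, hw₀V⟩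
        -- lower bound on psi μ' w₀
        have hlow : Ms - η/3 ≤ psi 𝒜 μ' w₀ := by
          have h1 : psi 𝒜 μ' w₁ ≤ psi 𝒜 μ' w₀ := hw₀max w₁ hw₁s
          have h2 := abs_le.mp (hdiff w₁ hw₁s)
          have h3 : psi 𝒜 μ w₁ = Ms := hpsiw₁
          linarith [hδbound, h2.1, h2.2]
        -- upper bound on psi μ' w₀
        have hup : psi 𝒜 μ' w₀ < cmax + η/3 := by
          have := hu hw₀K
          rw [Set.mem_iUnion₂] at this
          obtain ⟨p, hpu, hpw⟩ := this
          have hF : (1:ℝ)/2 * ((μ - p.1.1) ⬝ᵥ (armMatrix 𝒜 w₀).mulVec (μ - p.1.1)) < p.1.2 := hpw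
          have hple : p.1.2 ≤ cmax := Finset.le_sup' (fun p => p.1.2) hpu
          have hpsile : psi 𝒜 μ w₀ ≤ (1:ℝ)/2 * ((μ - p.1.1) ⬝ᵥ (armMatrix 𝒜 w₀).mulVec (μ - p.1.1)) :=
            hpsi_le_F w₀ hw₀s p.1.1 p.2.1
          have h2 := abs_le.mp (hdiff w₀ hw₀s)
          linarith [hδbound, h2.1, h2.2]
        rw [hη] at hlow hup
        linarith
end

section
/- (Forced exploration) Consider the sequence (a_t)_{t≥1} defined recursively by: i₀ = 1, and for every t ≥ 0, a_{t+1} = a₀(i_t) if λ_min(∑_{s=1}^t a_s a_sᵀ) < f(t) and a_{t+1} = b_t otherwise, with i_{t+1} = (i_t mod d) + 1_{{λ_min(∑_{s=1}^t a_s a_sᵀ) < f(t)}}. Then for all t ≥ 5d/4 + 1/(4d) + 3/2, one has λ_min( ∑_{s=1}^t a_s a_sᵀ ) ≥ f(t − d − 1). -/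
open Matrix

/-- The Euclidean norm of a vector in `ℝ^d`. -/
noncomputable def euclNorm {d : ℕ} (x : Fin d → ℝ) : ℝ :=
  Real.sqrt (∑ i, x i ^ 2)

/-- The smallest eigenvalue of a (symmetric) matrix, as the infimum of its Rayleigh
quotient over the unit sphere. -/
noncomputable def lambdaMin {d : ℕ} (M : Matrix (Fin d) (Fin d) ℝ) : ℝ :=
  sInf {r : ℝ | ∃ x : Fin d → ℝ, euclNorm x = 1 ∧ r = x ⬝ᵥ M.mulVec x}

namespace FE

variable {d : ℕ}

lemma sum_sq_eq_one {x : Fin d → ℝ} (hx : euclNorm x = 1) : ∑ i, x i ^ 2 = 1 := by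
  have h0 : 0 ≤ ∑ i, x i ^ 2 := by positivity
  have h := congrArg (fun y : ℝ => y ^ 2) hx
  simpa [euclNorm, Real.sq_sqrt h0] using h

lemma qset_nonempty (hd : 0 < d) (M : Matrix (Fin d) (Fin d) ℝ) :
    {r : ℝ | ∃ x : Fin d → ℝ, euclNorm x = 1 ∧ r = x ⬝ᵥ M.mulVec x}.Nonempty := by
  refine ⟨_, (Pi.single ⟨0, hd⟩ (1:ℝ) : Fin d → ℝ), ?_, rfl⟩
  have h : ∑ i, (Pi.single (⟨0, hd⟩ : Fin d) (1:ℝ)) i ^ 2 = (1:ℝ) := by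
    rw [Finset.sum_eq_single (⟨0, hd⟩ : Fin d)]
    · simp
    · intro b _ hb; simp [Pi.single_apply, hb]
    · simp
  simp [euclNorm, h]

lemma qset_bddBelow (M : Matrix (Fin d) (Fin d) ℝ) :
    BddBelow {r : ℝ | ∃ x : Fin d → ℝ, euclNorm x = 1 ∧ r = x ⬝ᵥ M.mulVec x} := by
  refine ⟨-(∑ i, ∑ j, |M i j|), ?_⟩
  rintro r ⟨x, hx, rfl⟩
  have hsum := sum_sq_eq_one hx
  have hxi : ∀ i, |x i| ≤ 1 := by
    intro i
    have h1 : x i ^ 2 ≤ 1 := by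
      calc x i ^ 2 ≤ ∑ j, x j ^ 2 :=
            Finset.single_le_sum (fun j _ => sq_nonneg (x j)) (Finset.mem_univ i)
        _ = 1 := hsum
    nlinarith [abs_nonneg (x i), sq_abs (x i)]
  have hre : x ⬝ᵥ M.mulVec x = ∑ i, ∑ j, x i * (M i j * x j) := by
    simp [dotProduct, mulVec, Finset.mul_sum]
  rw [hre]
  have : ∑ i, ∑ j, (-|M i j|) ≤ ∑ i, ∑ j, x i * (M i j * x j) := by
    refine Finset.sum_le_sum fun i _ => Finset.sum_le_sum fun j _ => ?_
    have habs : |x i * (M i j * x j)| ≤ |M i j| := by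
      rw [abs_mul, abs_mul]
      have h1 : |M i j| * |x j| ≤ |M i j| * 1 := mul_le_mul_of_nonneg_left (hxi j) (abs_nonneg _)
      have h2 : |x i| * (|M i j| * |x j|) ≤ 1 * (|M i j| * |x j|) :=
        mul_le_mul_of_nonneg_right (hxi i) (by positivity)
      nlinarith
    linarith [(abs_le.mp habs).1]
  calc -(∑ i, ∑ j, |M i j|) = ∑ i, ∑ j, (-|M i j|) := by
        simp [Finset.sum_neg_distrib]
    _ ≤ _ := this

lemma lambdaMin_add_le (hd : 0 < d) (A B : Matrix (Fin d) (Fin d) ℝ) :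
    lambdaMin A + lambdaMin B ≤ lambdaMin (A + B) := by
  unfold lambdaMin
  apply le_csInf (qset_nonempty hd _)
  rintro r ⟨x, hx, rfl⟩
  have hA : lambdaMin A ≤ x ⬝ᵥ A.mulVec x := csInf_le (qset_bddBelow A) ⟨x, hx, rfl⟩
  have hB : lambdaMin B ≤ x ⬝ᵥ B.mulVec x := csInf_le (qset_bddBelow B) ⟨x, hx, rfl⟩
  have hsplit : x ⬝ᵥ (A + B).mulVec x = x ⬝ᵥ A.mulVec x + x ⬝ᵥ B.mulVec x := by
    simp [Matrix.add_mulVec, dotProduct_add]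
  rw [hsplit]
  exact add_le_add hA hB

lemma quad_rank1 (aa x : Fin d → ℝ) :
    x ⬝ᵥ (vecMulVec aa aa).mulVec x = (aa ⬝ᵥ x) ^ 2 := by
  simp only [mulVec, dotProduct, vecMulVec_apply]
  rw [sq, Finset.sum_mul_sum]
  refine Finset.sum_congr rfl fun i _ => ?_
  rw [Finset.mul_sum]
  exact Finset.sum_congr rfl fun j _ => by ring

lemma quad_sum_rank1 (v : ℕ → Fin d → ℝ) (S : Finset ℕ) (x : Fin d → ℝ) :
    x ⬝ᵥ (∑ s ∈ S, vecMulVec (v s) (v s)).mulVec x = ∑ s ∈ S, (v s ⬝ᵥ x) ^ 2 := by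
  classical
  induction S using Finset.induction_on with
  | empty => simp [mulVec, dotProduct]
  | insert _ _ hnotmem ih =>
    rw [Finset.sum_insert hnotmem, Finset.sum_insert hnotmem, Matrix.add_mulVec,
      dotProduct_add, quad_rank1, ih]

lemma lambdaMin_sum_nonneg (hd : 0 < d) (v : ℕ → Fin d → ℝ) (S : Finset ℕ) :
    0 ≤ lambdaMin (∑ s ∈ S, vecMulVec (v s) (v s)) := by
  unfold lambdaMin
  apply le_csInf (qset_nonempty hd _)
  rintro r ⟨x, hx, rfl⟩
  rw [quad_sum_rank1]
  exact Finset.sum_nonneg fun s _ => sq_nonneg _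

lemma lambdaMin_mono (hd : 0 < d) (v : ℕ → Fin d → ℝ) {S T : Finset ℕ} (h : S ⊆ T) :
    lambdaMin (∑ s ∈ S, vecMulVec (v s) (v s)) ≤ lambdaMin (∑ s ∈ T, vecMulVec (v s) (v s)) := by
  have hsd := Finset.sum_sdiff (f := fun s => vecMulVec (v s) (v s)) h
  calc lambdaMin (∑ s ∈ S, vecMulVec (v s) (v s))
      ≤ lambdaMin (∑ s ∈ T \ S, vecMulVec (v s) (v s))
          + lambdaMin (∑ s ∈ S, vecMulVec (v s) (v s)) :=
        le_add_of_nonneg_left (lambdaMin_sum_nonneg hd v _)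
    _ ≤ lambdaMin (∑ s ∈ T \ S, vecMulVec (v s) (v s) + ∑ s ∈ S, vecMulVec (v s) (v s)) :=
        lambdaMin_add_le hd _ _
    _ = lambdaMin (∑ s ∈ T, vecMulVec (v s) (v s)) := by rw [hsd]


lemma rot {α : Type*} [AddCommMonoid α] (hd : 0 < d) (H : ℕ → α) :
    ∑ r ∈ Finset.range d, H ((r + 1) % d) = ∑ r ∈ Finset.range d, H (r % d) := by
  obtain ⟨e, rfl⟩ : ∃ e, d = e + 1 := ⟨d - 1, by omega⟩
  rw [Finset.sum_range_succ, Finset.sum_range_succ']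
  simp

lemma cycsum {α : Type*} [AddCommMonoid α] (hd : 0 < d) (G : ℕ → α) (c : ℕ) :
    ∑ r ∈ Finset.range d, G ((c + r) % d) = ∑ r ∈ Finset.range d, G r := by
  induction c with
  | zero =>
    refine Finset.sum_congr rfl fun r hr => ?_
    rw [Nat.zero_add, Nat.mod_eq_of_lt (Finset.mem_range.mp hr)]
  | succ c IH =>
    calc ∑ r ∈ Finset.range d, G ((c + 1 + r) % d)
        = ∑ r ∈ Finset.range d, (fun v => G ((c + v) % d)) ((r + 1) % d) := by
          refine Finset.sum_congr rfl fun r _ => ?_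
          simp only []
          rw [Nat.add_mod_mod, show c + (r + 1) = c + 1 + r from by omega]
      _ = ∑ r ∈ Finset.range d, (fun v => G ((c + v) % d)) (r % d) :=
          rot hd (fun v => G ((c + v) % d))
      _ = ∑ r ∈ Finset.range d, G ((c + r) % d) := by
          refine Finset.sum_congr rfl fun r hr => ?_
          simp only []
          rw [Nat.mod_eq_of_lt (Finset.mem_range.mp hr)]
      _ = ∑ r ∈ Finset.range d, G r := IH

lemma idx_formula (hd : 0 < d) (i : ℕ → ℕ) (σ : ℕ)
    (hstep : ∀ s, σ ≤ s → s < σ + d → i (s + 1) = i s % d + 1)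
    (h1 : 1 ≤ i σ) (h2 : i σ ≤ d) :
    ∀ r, r < d → i (σ + r) = (i σ - 1 + r) % d + 1 := by
  intro r
  induction r with
  | zero =>
    intro _
    rw [Nat.add_zero, Nat.add_zero, Nat.mod_eq_of_lt (by omega)]
    omega
  | succ r IH =>
    intro hr
    have hIH := IH (by omega)
    have hs := hstep (σ + r) (by omega) (by omega)
    rw [show σ + (r + 1) = σ + r + 1 from rfl, hs, hIH]
    rw [Nat.mod_add_mod]
    simp [Nat.add_assoc]

lemma block_sum (hd : 0 < d) (a a0 : ℕ → Fin d → ℝ) (i : ℕ → ℕ) (σ : ℕ)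
    (hboth : ∀ s, σ ≤ s → s < σ + d →
      a (s + 1) = a0 (i s) ∧ i (s + 1) = i s % d + 1)
    (h1 : 1 ≤ i σ) (h2 : i σ ≤ d) :
    ∑ s ∈ Finset.Icc (σ + 1) (σ + d), vecMulVec (a s) (a s)
      = ∑ j ∈ Finset.Icc 1 d, vecMulVec (a0 j) (a0 j) := by
  have hidx := idx_formula hd i σ (fun s hs hs' => (hboth s hs hs').2) h1 h2
  have harm : ∀ r, r < d → a (σ + 1 + r) = a0 ((i σ - 1 + r) % d + 1) := by
    intro r hr
    have := (hboth (σ + r) (by omega) (by omega)).1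
    rw [show σ + 1 + r = σ + r + 1 by omega, this, hidx r hr]
  have hL : ∑ s ∈ Finset.Icc (σ + 1) (σ + d), vecMulVec (a s) (a s)
      = ∑ r ∈ Finset.range d, vecMulVec (a (σ + 1 + r)) (a (σ + 1 + r)) := by
    rw [show Finset.Icc (σ + 1) (σ + d) = Finset.Ico (σ + 1) (σ + d + 1) by
      rw [Finset.Ico_add_one_right_eq_Icc]]
    rw [Finset.sum_Ico_eq_sum_range]
    simp only [show σ + d + 1 - (σ + 1) = d by omega]
  have hR : ∑ j ∈ Finset.Icc 1 d, vecMulVec (a0 j) (a0 j)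
      = ∑ r ∈ Finset.range d, vecMulVec (a0 (1 + r)) (a0 (1 + r)) := by
    rw [show Finset.Icc 1 d = Finset.Ico 1 (d + 1) by rw [Finset.Ico_add_one_right_eq_Icc]]
    rw [Finset.sum_Ico_eq_sum_range]
    simp only [show d + 1 - 1 = d from rfl]
  rw [hL, hR]
  calc ∑ r ∈ Finset.range d, vecMulVec (a (σ + 1 + r)) (a (σ + 1 + r))
      = ∑ r ∈ Finset.range d,
          (fun v => vecMulVec (a0 (v + 1)) (a0 (v + 1))) ((i σ - 1 + r) % d) := by
        refine Finset.sum_congr rfl fun r hr => ?_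
        rw [harm r (Finset.mem_range.mp hr)]
    _ = ∑ r ∈ Finset.range d, (fun v => vecMulVec (a0 (v + 1)) (a0 (v + 1))) r :=
        cycsum hd (fun v => vecMulVec (a0 (v + 1)) (a0 (v + 1))) (i σ - 1)
    _ = ∑ r ∈ Finset.range d, vecMulVec (a0 (1 + r)) (a0 (1 + r)) := by
        refine Finset.sum_congr rfl fun r _ => ?_
        simp [Nat.add_comm]

lemma chain (hd : 0 < d) (a a0 : ℕ → Fin d → ℝ) (i : ℕ → ℕ) :
    ∀ (p σ : ℕ),
    (∀ s, σ ≤ s → s < σ + p * d →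
      a (s + 1) = a0 (i s) ∧ i (s + 1) = i s % d + 1) →
    1 ≤ i σ → i σ ≤ d →
    lambdaMin (∑ s ∈ Finset.Icc 1 σ, vecMulVec (a s) (a s))
        + p * lambdaMin (∑ j ∈ Finset.Icc 1 d, vecMulVec (a0 j) (a0 j))
      ≤ lambdaMin (∑ s ∈ Finset.Icc 1 (σ + p * d), vecMulVec (a s) (a s)) := by
  intro p
  induction p with
  | zero => intro σ _ _ _; simp
  | succ p IH =>
    intro σ hboth h1 h2
    have hsplit : ∑ s ∈ Finset.Icc 1 (σ + d), vecMulVec (a s) (a s)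
        = ∑ s ∈ Finset.Icc 1 σ, vecMulVec (a s) (a s)
          + ∑ s ∈ Finset.Icc (σ + 1) (σ + d), vecMulVec (a s) (a s) := by
      rw [show (1:ℕ) = 0 + 1 from rfl, Finset.Icc_add_one_left_eq_Ioc, Finset.Icc_add_one_left_eq_Ioc,
        Nat.zero_add, Finset.Icc_add_one_left_eq_Ioc, ← Finset.sum_Ioc_consecutive _ (Nat.zero_le σ) (Nat.le_add_right σ d)]
    have hdle : d ≤ (p + 1) * d := Nat.le_mul_of_pos_left d (Nat.succ_pos p)
    have hblock := block_sum hd a a0 i σ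
      (fun s hs hs' => hboth s hs (lt_of_lt_of_le hs' (Nat.add_le_add_left hdle σ))) h1 h2
    set L := lambdaMin (∑ j ∈ Finset.Icc 1 d, vecMulVec (a0 j) (a0 j)) with hL
    have hst : lambdaMin (∑ s ∈ Finset.Icc 1 σ, vecMulVec (a s) (a s)) + L
        ≤ lambdaMin (∑ s ∈ Finset.Icc 1 (σ + d), vecMulVec (a s) (a s)) := by
      rw [hsplit, hL, ← hblock]
      exact lambdaMin_add_le hd _ _
    have hb1 := hboth (σ + (d - 1)) (by omega)
      (lt_of_lt_of_le (by omega) (Nat.add_le_add_left hdle σ))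
    have hieq : i (σ + d) = i (σ + (d - 1)) % d + 1 := by
      rw [show σ + d = σ + (d - 1) + 1 from by omega]
      exact hb1.2
    have h1' : 1 ≤ i (σ + d) := by omega
    have h2' : i (σ + d) ≤ d := by
      have := Nat.mod_lt (i (σ + (d - 1))) hd
      omega
    have heq2 : σ + d + p * d = σ + (p + 1) * d := by ring
    have hIH := IH (σ + d) (fun s hs hs' => hboth s (by omega) (by omega)) h1' h2'
    calc lambdaMin (∑ s ∈ Finset.Icc 1 σ, vecMulVec (a s) (a s)) + ↑(p + 1) * L
        = (lambdaMin (∑ s ∈ Finset.Icc 1 σ, vecMulVec (a s) (a s)) + L) + ↑p * L := by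
          push_cast; ring
      _ ≤ lambdaMin (∑ s ∈ Finset.Icc 1 (σ + d), vecMulVec (a s) (a s)) + ↑p * L := by
          linarith
      _ ≤ lambdaMin (∑ s ∈ Finset.Icc 1 (σ + d + p * d), vecMulVec (a s) (a s)) := hIH
      _ = lambdaMin (∑ s ∈ Finset.Icc 1 (σ + (p + 1) * d), vecMulVec (a s) (a s)) := by
          rw [heq2]

lemma arith (st k dd m t : ℕ) (hmk : m ≤ k * dd + dd)
    (hts : t = st + 1 + m) (cc L : ℝ) (hc : 0 ≤ cc) (hL : cc * Real.sqrt dd = L) :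
    cc * Real.sqrt ((t:ℝ) - dd - 1) ≤ cc * Real.sqrt st + k * L := by
  rw [← hL]
  have hkk : (k:ℝ) ≤ (k:ℝ) ^ 2 := by exact_mod_cast Nat.le_self_pow two_ne_zero k
  have hs0 : (0:ℝ) ≤ st := Nat.cast_nonneg st
  have hd0 : (0:ℝ) ≤ dd := Nat.cast_nonneg dd
  have h1 : Real.sqrt st ^ 2 = st := Real.sq_sqrt hs0
  have h2 : Real.sqrt dd ^ 2 = dd := Real.sq_sqrt hd0
  have hmR : (m:ℝ) ≤ k * dd + dd := by exact_mod_cast hmk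
  have htR : (t:ℝ) = st + 1 + m := by exact_mod_cast hts
  have key : (t:ℝ) - dd - 1 ≤ (Real.sqrt st + k * Real.sqrt dd) ^ 2 := by
    have e : (Real.sqrt st + k * Real.sqrt dd) ^ 2
        = Real.sqrt st ^ 2 + 2 * (k:ℝ) * (Real.sqrt st * Real.sqrt dd)
          + (k:ℝ) ^ 2 * Real.sqrt dd ^ 2 := by ring
    rw [e, h1, h2]
    have hnn : 0 ≤ (k:ℝ) * (Real.sqrt st * Real.sqrt dd) := by positivity
    have hkd2 : (k:ℝ) * dd ≤ (k:ℝ) ^ 2 * dd := mul_le_mul_of_nonneg_right hkk hd0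
    linarith
  have hstep : Real.sqrt ((t:ℝ) - dd - 1) ≤ Real.sqrt st + k * Real.sqrt dd := by
    have h := Real.sqrt_le_sqrt key
    rwa [Real.sqrt_sq (by positivity)] at h
  calc cc * Real.sqrt ((t:ℝ) - dd - 1) ≤ cc * (Real.sqrt st + k * Real.sqrt dd) :=
        mul_le_mul_of_nonneg_left hstep hc
    _ = cc * Real.sqrt st + k * (cc * Real.sqrt dd) := by ring

end FE

/-- (Forced exploration) With `𝒜₀ = {a₀(1), …, a₀(d)} ⊆ 𝒜` such that
`λ_min(∑_{a∈𝒜₀} a aᵀ) > 0`, `f(x) = c_{𝒜₀}√x` where `c_{𝒜₀} = λ_min(∑_{a∈𝒜₀} a aᵀ)/√d`,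
and the recursion `i₀ = 1`, `a_{t+1} = a₀(i_t)` if `λ_min(∑_{s=1}^t a_s a_sᵀ) < f(t)`
(else `a_{t+1} = b_t`), `i_{t+1} = (i_t mod d) + 1_{λ_min < f(t)}`, one has
`λ_min(∑_{s=1}^t a_s a_sᵀ) ≥ f(t − d − 1)` for all `t ≥ 5d/4 + 1/(4d) + 3/2`. -/
theorem forced_exploration {d : ℕ} (𝒜 : Finset (Fin d → ℝ))
    (a0 : ℕ → Fin d → ℝ) (ha0 : ∀ j ∈ Finset.Icc 1 d, a0 j ∈ 𝒜)
    (hpos : 0 < lambdaMin (∑ j ∈ Finset.Icc 1 d, vecMulVec (a0 j) (a0 j)))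
    (b : ℕ → Fin d → ℝ) (hbmem : ∀ t, b t ∈ 𝒜)
    (f : ℝ → ℝ)
    (hf : ∀ x : ℝ, f x =
      lambdaMin (∑ j ∈ Finset.Icc 1 d, vecMulVec (a0 j) (a0 j)) / Real.sqrt d * Real.sqrt x)
    (a : ℕ → Fin d → ℝ) (i : ℕ → ℕ) (hi0 : i 0 = 1)
    (ha : ∀ t : ℕ, a (t + 1) =
      if lambdaMin (∑ s ∈ Finset.Icc 1 t, vecMulVec (a s) (a s)) < f t then a0 (i t) else b t)
    (hi : ∀ t : ℕ, i (t + 1) = i t % d +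
      if lambdaMin (∑ s ∈ Finset.Icc 1 t, vecMulVec (a s) (a s)) < f t then 1 else 0) :
    ∀ t : ℕ, (5 * d / 4 + 1 / (4 * d) + 3 / 2 : ℝ) ≤ t →
      f ((t : ℝ) - d - 1) ≤ lambdaMin (∑ s ∈ Finset.Icc 1 t, vecMulVec (a s) (a s)) := by
  classical
  rcases Nat.eq_zero_or_pos d with hd0 | hd
  · exfalso
    subst hd0
    have hS : {r : ℝ | ∃ x : Fin 0 → ℝ, euclNorm x = 1 ∧
        r = x ⬝ᵥ (∑ j ∈ Finset.Icc 1 0, vecMulVec (a0 j) (a0 j)).mulVec x} = (∅ : Set ℝ) := by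
      ext r
      simp only [Set.mem_setOf_eq, Set.mem_empty_iff_false, iff_false, not_exists]
      intro x hx
      simp [euclNorm] at hx
    rw [show lambdaMin (∑ j ∈ Finset.Icc 1 0, vecMulVec (a0 j) (a0 j)) = sInf
      {r : ℝ | ∃ x : Fin 0 → ℝ, euclNorm x = 1 ∧
        r = x ⬝ᵥ (∑ j ∈ Finset.Icc 1 0, vecMulVec (a0 j) (a0 j)).mulVec x} from rfl,
      hS, Real.sInf_empty] at hpos
    exact lt_irrefl 0 hpos
  intro t ht
  set L := lambdaMin (∑ j ∈ Finset.Icc 1 d, vecMulVec (a0 j) (a0 j)) with hLdef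
  have hdR : (1:ℝ) ≤ (d:ℝ) := by exact_mod_cast hd
  have ht2 : 2 ≤ t := by
    have h1 : (0:ℝ) ≤ 1 / (4 * (d:ℝ)) := by positivity
    have h2 : (2:ℝ) < t := by nlinarith
    have h3 : 2 < t := by exact_mod_cast h2
    omega
  set P : ℕ → Prop := fun s =>
    ¬ (lambdaMin (∑ s' ∈ Finset.Icc 1 s, vecMulVec (a s') (a s')) < f s) with hP
  set st := Nat.findGreatest P (t - 1) with hstdef
  have hstle : st ≤ t - 1 := Nat.findGreatest_le _
  have hexp : ∀ s, st < s → s ≤ t - 1 →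
      lambdaMin (∑ s' ∈ Finset.Icc 1 s, vecMulVec (a s') (a s')) < f s := by
    intro s h1 h2
    by_contra hns
    exact absurd (Nat.le_findGreatest h2 hns) (not_le.mpr h1)
  have hc : (0:ℝ) ≤ L / Real.sqrt d := div_nonneg hpos.le (Real.sqrt_nonneg _)
  have hLc : L / Real.sqrt d * Real.sqrt d = L :=
    div_mul_cancel₀ _ (ne_of_gt (Real.sqrt_pos.mpr (by exact_mod_cast hd)))
  have hfs : f st ≤ lambdaMin (∑ s' ∈ Finset.Icc 1 st, vecMulVec (a s') (a s')) := by
    rcases Nat.eq_zero_or_pos st with h0 | hpos'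
    · have hzero : f ((0:ℕ):ℝ) = 0 := by rw [hf]; simp
      rw [h0, hzero]
      exact FE.lambdaMin_sum_nonneg hd a _
    · have hPst : P st :=
        (Nat.findGreatest_eq_iff.mp hstdef.symm).2.1 (Nat.pos_iff_ne_zero.mp hpos')
      exact not_lt.mp hPst
  clear_value st
  set m := t - 1 - st with hm
  set k := (m - 1) / d with hk
  have hkd : k * d ≤ m - 1 := by rw [hk]; exact Nat.div_mul_le_self _ _
  have hdm1 : k * d + (m - 1) % d = m - 1 := by
    rw [hk, Nat.mul_comm]; exact Nat.div_add_mod _ _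
  have hdm2 : (m - 1) % d < d := Nat.mod_lt _ hd
  clear_value m k
  have hmk : m ≤ k * d + d := by omega
  have hts : t = st + 1 + m := by omega
  have hkey : lambdaMin (∑ s' ∈ Finset.Icc 1 st, vecMulVec (a s') (a s')) + (k:ℝ) * L
      ≤ lambdaMin (∑ s ∈ Finset.Icc 1 t, vecMulVec (a s) (a s)) := by
    rcases Nat.eq_zero_or_pos m with hm0 | hm1
    · have hk0 : k = 0 := by
        rw [hk, hm0]
        simp
      rw [hk0]
      simp only [Nat.cast_zero, zero_mul, add_zero]
      exact FE.lambdaMin_mono hd a (Finset.Icc_subset_Icc_right (by omega))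
    · have hexp1 := hexp (st + 1) (Nat.lt_succ_self st) (by omega)
      have hiσ := hi (st + 1)
      rw [if_pos hexp1] at hiσ
      have hiσ' : i (st + 2) = i (st + 1) % d + 1 := hiσ
      have h1σ : 1 ≤ i (st + 2) := by omega
      have h2σ : i (st + 2) ≤ d := by
        have := Nat.mod_lt (i (st + 1)) hd
        omega
      have hboth : ∀ s, st + 2 ≤ s → s < st + 2 + k * d →
          a (s + 1) = a0 (i s) ∧ i (s + 1) = i s % d + 1 := by
        intro s hs hs'
        have hsle : s ≤ t - 1 := by omega
        have hE := hexp s (by omega) hsle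
        exact ⟨by rw [ha s, if_pos hE], by rw [hi s, if_pos hE]⟩
      have hchain := FE.chain hd a a0 i k (st + 2) hboth h1σ h2σ
      have monoA : lambdaMin (∑ s' ∈ Finset.Icc 1 st, vecMulVec (a s') (a s'))
          ≤ lambdaMin (∑ s' ∈ Finset.Icc 1 (st + 2), vecMulVec (a s') (a s')) :=
        FE.lambdaMin_mono hd a (Finset.Icc_subset_Icc_right (by omega))
      have monoB : lambdaMin (∑ s' ∈ Finset.Icc 1 (st + 2 + k * d), vecMulVec (a s') (a s'))
          ≤ lambdaMin (∑ s' ∈ Finset.Icc 1 t, vecMulVec (a s') (a s')) :=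
        FE.lambdaMin_mono hd a (Finset.Icc_subset_Icc_right (by omega))
      calc lambdaMin (∑ s' ∈ Finset.Icc 1 st, vecMulVec (a s') (a s')) + (k:ℝ) * L
          ≤ lambdaMin (∑ s' ∈ Finset.Icc 1 (st + 2), vecMulVec (a s') (a s')) + (k:ℝ) * L := by
            linarith
        _ ≤ lambdaMin (∑ s' ∈ Finset.Icc 1 (st + 2 + k * d), vecMulVec (a s') (a s')) := hchain
        _ ≤ _ := monoB
  have harith : f ((t:ℝ) - d - 1) ≤ f (st:ℝ) + (k:ℝ) * L := by
    rw [hf, hf]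
    exact FE.arith st k d m t hmk hts (L / Real.sqrt d) L hc hLc
  have hfst : f (st:ℝ) ≤ lambdaMin (∑ s' ∈ Finset.Icc 1 st, vecMulVec (a s') (a s')) := hfs
  linarith
end

section
/- (Closed form of the generalized log-likelihood ratio) For all a, b ∈ ℝ^d with a ≠ b and all ε ≥ 0, inf_{μ ∈ ℝ^d : μᵀ(a−b) ≤ −ε} ½ ∑_{s=1}^t (r_s − μᵀa_s)² − inf_{μ ∈ ℝ^d : μᵀ(a−b) ≥ −ε} ½ ∑_{s=1}^t (r_s − μᵀa_s)² = sgn( μ̂ᵀ(a−b) + ε ) · ( μ̂ᵀ(a−b) + ε )² / ( 2 (a−b)ᵀ G⁻¹ (a−b) ). -/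
open Matrix

/-- (Closed form of the generalized log-likelihood ratio) With `G = ∑_{s=1}^t a_s a_sᵀ`
positive definite and `μ̂ = G⁻¹ ∑_s a_s r_s`, for all `a ≠ b` and `ε ≥ 0`,
`inf_{μᵀ(a−b) ≤ −ε} ½∑(r_s − μᵀa_s)² − inf_{μᵀ(a−b) ≥ −ε} ½∑(r_s − μᵀa_s)²
  = sgn(μ̂ᵀ(a−b)+ε)(μ̂ᵀ(a−b)+ε)²/(2(a−b)ᵀG⁻¹(a−b))`. -/
theorem gllr_closed_form {d t : ℕ} (ht : 1 ≤ t)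
    (as : Fin t → Fin d → ℝ) (rs : Fin t → ℝ)
    (G : Matrix (Fin d) (Fin d) ℝ) (hGdef : G = ∑ s, vecMulVec (as s) (as s))
    (hG : G.PosDef)
    (μhat : Fin d → ℝ) (hμhat : μhat = G⁻¹.mulVec (∑ s, rs s • as s))
    (a b : Fin d → ℝ) (hab : a ≠ b) (ε : ℝ) (hε : 0 ≤ ε) :
    sInf {v : ℝ | ∃ μ : Fin d → ℝ, μ ⬝ᵥ (a - b) ≤ -ε ∧
        v = (1 / 2) * ∑ s, (rs s - μ ⬝ᵥ as s) ^ 2} -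
      sInf {v : ℝ | ∃ μ : Fin d → ℝ, -ε ≤ μ ⬝ᵥ (a - b) ∧
        v = (1 / 2) * ∑ s, (rs s - μ ⬝ᵥ as s) ^ 2} =
    Real.sign (μhat ⬝ᵥ (a - b) + ε) * (μhat ⬝ᵥ (a - b) + ε) ^ 2 /
      (2 * ((a - b) ⬝ᵥ G⁻¹.mulVec (a - b))) := by
  classical
  -- basic facts about the quadratic form
  have hGmv : ∀ y : Fin d → ℝ, G *ᵥ y = ∑ s, (as s ⬝ᵥ y) • as s := by
    intro y
    rw [hGdef]
    funext i
    simp only [Matrix.mulVec, dotProduct, vecMulVec_apply, Matrix.sum_apply,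
      Finset.sum_mul, Finset.sum_apply, Pi.smul_apply, smul_eq_mul, Finset.mul_sum]
    rw [Finset.sum_comm]
    exact Finset.sum_congr rfl fun s _ => Finset.sum_congr rfl fun j _ => by ring
  have hdotsum : ∀ (x : Fin d → ℝ) (cs : Fin t → ℝ),
      x ⬝ᵥ ∑ s, cs s • as s = ∑ s, cs s * (x ⬝ᵥ as s) := by
    intro x cs
    simp only [dotProduct, Finset.sum_apply, Pi.smul_apply, smul_eq_mul, Finset.mul_sum]
    rw [Finset.sum_comm]
    exact Finset.sum_congr rfl fun s _ => Finset.sum_congr rfl fun j _ => by ring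
  have hB : ∀ x y : Fin d → ℝ, x ⬝ᵥ G *ᵥ y = ∑ s, (x ⬝ᵥ as s) * (as s ⬝ᵥ y) := by
    intro x y
    rw [hGmv, hdotsum]
    exact Finset.sum_congr rfl fun s _ => by rw [dotProduct_comm (as s) y]; ring
  have hBsymm : ∀ x y : Fin d → ℝ, x ⬝ᵥ G *ᵥ y = y ⬝ᵥ G *ᵥ x := by
    intro x y
    rw [hB, hB]
    exact Finset.sum_congr rfl fun s _ => by
      rw [dotProduct_comm (as s) y, dotProduct_comm (as s) x]; ring
  have hBnn : ∀ x : Fin d → ℝ, 0 ≤ x ⬝ᵥ G *ᵥ x := by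
    intro x
    by_cases hx : x = 0
    · simp [hx]
    · have := hG.dotProduct_mulVec_pos hx
      simpa using this.le
  have hdet : IsUnit G.det := hG.det_pos.ne'.isUnit
  set c : Fin d → ℝ := a - b with hc_def
  have hc : c ≠ 0 := sub_ne_zero_of_ne hab
  set w : Fin d → ℝ := G⁻¹ *ᵥ c with hw_def
  have hGw : G *ᵥ w = c := by
    rw [hw_def, Matrix.mulVec_mulVec, Matrix.mul_nonsing_inv G hdet, Matrix.one_mulVec]
  set q : ℝ := c ⬝ᵥ w with hq_def
  have hq : 0 < q := by
    have := hG.inv.dotProduct_mulVec_pos hc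
    simpa [hq_def, hw_def] using this
  set m : ℝ := μhat ⬝ᵥ c + ε with hm_def
  have hμc : μhat ⬝ᵥ c = m - ε := by rw [hm_def]; ring
  have hGmu : G *ᵥ μhat = ∑ s, rs s • as s := by
    rw [hμhat, Matrix.mulVec_mulVec, Matrix.mul_nonsing_inv G hdet, Matrix.one_mulVec]
  -- decomposition of the objective
  have e1 : ∀ ν : Fin d → ℝ, ∑ s, (rs s - ν ⬝ᵥ as s) ^ 2 =
      ∑ s, (rs s) ^ 2 - 2 * (ν ⬝ᵥ G *ᵥ μhat) + ν ⬝ᵥ G *ᵥ ν := by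
    intro ν
    have h2 : ν ⬝ᵥ G *ᵥ μhat = ∑ s, rs s * (ν ⬝ᵥ as s) := by rw [hGmu, hdotsum]
    have h3 : ν ⬝ᵥ G *ᵥ ν = ∑ s, (ν ⬝ᵥ as s) ^ 2 := by
      rw [hB]
      exact Finset.sum_congr rfl fun s _ => by rw [dotProduct_comm (as s) ν]; ring
    rw [h2, h3, Finset.mul_sum, ← Finset.sum_sub_distrib, ← Finset.sum_add_distrib]
    exact Finset.sum_congr rfl fun s _ => by ring
  have hf : ∀ μ : Fin d → ℝ, (1 / 2) * ∑ s, (rs s - μ ⬝ᵥ as s) ^ 2 =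
      (1 / 2) * ∑ s, (rs s - μhat ⬝ᵥ as s) ^ 2
        + (1 / 2) * ((μ - μhat) ⬝ᵥ G *ᵥ (μ - μhat)) := by
    intro μ
    have hbil : (μ - μhat) ⬝ᵥ G *ᵥ (μ - μhat)
        = μ ⬝ᵥ G *ᵥ μ - 2 * (μ ⬝ᵥ G *ᵥ μhat) + μhat ⬝ᵥ G *ᵥ μhat := by
      rw [Matrix.mulVec_sub, dotProduct_sub, sub_dotProduct, sub_dotProduct,
        hBsymm μhat μ]
      ring
    rw [e1 μ, e1 μhat, hbil]
    ring
  -- Cauchy–Schwarz for the form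
  have hCS : ∀ ν : Fin d → ℝ, (ν ⬝ᵥ c) ^ 2 ≤ (ν ⬝ᵥ G *ᵥ ν) * q := by
    intro ν
    have h0 : 0 ≤ (q • ν - (ν ⬝ᵥ c) • w) ⬝ᵥ G *ᵥ (q • ν - (ν ⬝ᵥ c) • w) := hBnn _
    have hx : (q • ν - (ν ⬝ᵥ c) • w) ⬝ᵥ G *ᵥ (q • ν - (ν ⬝ᵥ c) • w)
        = q * ((ν ⬝ᵥ G *ᵥ ν) * q - (ν ⬝ᵥ c) ^ 2) := by
      have hνw : ν ⬝ᵥ G *ᵥ w = ν ⬝ᵥ c := by rw [hGw]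
      have hwν : w ⬝ᵥ G *ᵥ ν = ν ⬝ᵥ c := by rw [hBsymm, hGw]
      have hww : w ⬝ᵥ G *ᵥ w = q := by rw [hGw, dotProduct_comm, ← hq_def]
      rw [Matrix.mulVec_sub, Matrix.mulVec_smul, Matrix.mulVec_smul]
      simp only [dotProduct_sub, sub_dotProduct, dotProduct_smul, smul_dotProduct,
        smul_eq_mul, hνw, hwν, hww]
      ring
    nlinarith [h0, hq]
  -- lower bound for the objective
  have hlow : ∀ μ : Fin d → ℝ,
      (1 / 2) * ∑ s, (rs s - μhat ⬝ᵥ as s) ^ 2 + ((μ - μhat) ⬝ᵥ c) ^ 2 / (2 * q)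
        ≤ (1 / 2) * ∑ s, (rs s - μ ⬝ᵥ as s) ^ 2 := by
    intro μ
    rw [hf μ]
    have h1 := hCS (μ - μhat)
    have h2 : ((μ - μhat) ⬝ᵥ c) ^ 2 / (2 * q) ≤ (1 / 2) * ((μ - μhat) ⬝ᵥ G *ᵥ (μ - μhat)) := by
      rw [div_le_iff₀ (by linarith)]
      nlinarith [h1]
    linarith
  -- the optimizer on the boundary
  set μstar : Fin d → ℝ := μhat - (m / q) • w with hμstar_def
  have hμstarc : μstar ⬝ᵥ c = -ε := by
    rw [hμstar_def, sub_dotProduct, smul_dotProduct, dotProduct_comm w c, ← hq_def,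
      hμc, smul_eq_mul]
    field_simp
    ring
  have hFμstar : (1 / 2) * ∑ s, (rs s - μstar ⬝ᵥ as s) ^ 2 =
      (1 / 2) * ∑ s, (rs s - μhat ⬝ᵥ as s) ^ 2 + m ^ 2 / (2 * q) := by
    rw [hf μstar]
    have : μstar - μhat = -((m / q) • w) := by rw [hμstar_def]; abel
    rw [this]
    have hval : (-((m / q) • w)) ⬝ᵥ G *ᵥ (-((m / q) • w)) = (m / q) ^ 2 * q := by
      rw [Matrix.mulVec_neg, Matrix.mulVec_smul, dotProduct_neg, neg_dotProduct,
        neg_neg, smul_dotProduct, dotProduct_smul]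
      have hww : w ⬝ᵥ G *ᵥ w = q := by rw [hGw, dotProduct_comm, ← hq_def]
      rw [hww]
      simp only [smul_eq_mul]
      ring
    rw [hval]
    field_simp
  have hFub : ∀ μ : Fin d → ℝ,
      (1 / 2) * ∑ s, (rs s - μhat ⬝ᵥ as s) ^ 2 ≤ (1 / 2) * ∑ s, (rs s - μ ⬝ᵥ as s) ^ 2 := by
    intro μ
    rw [hf μ]
    have := hBnn (μ - μhat)
    linarith
  rcases le_or_gt 0 m with hm | hm
  · -- case m ≥ 0
    have hInf2 : sInf {v : ℝ | ∃ μ : Fin d → ℝ, -ε ≤ μ ⬝ᵥ c ∧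
        v = (1 / 2) * ∑ s, (rs s - μ ⬝ᵥ as s) ^ 2}
        = (1 / 2) * ∑ s, (rs s - μhat ⬝ᵥ as s) ^ 2 := by
      refine IsLeast.csInf_eq ⟨⟨μhat, by rw [hμc]; linarith, rfl⟩, ?_⟩
      rintro v ⟨μ, _, rfl⟩
      exact hFub μ
    have hInf1 : sInf {v : ℝ | ∃ μ : Fin d → ℝ, μ ⬝ᵥ c ≤ -ε ∧
        v = (1 / 2) * ∑ s, (rs s - μ ⬝ᵥ as s) ^ 2}
        = (1 / 2) * ∑ s, (rs s - μhat ⬝ᵥ as s) ^ 2 + m ^ 2 / (2 * q) := by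
      refine IsLeast.csInf_eq ⟨⟨μstar, le_of_eq hμstarc, hFμstar.symm⟩, ?_⟩
      rintro v ⟨μ, hμle, rfl⟩
      have h1 : (μ - μhat) ⬝ᵥ c ≤ -m := by
        rw [sub_dotProduct, hμc]; linarith
      have h2 : m ^ 2 ≤ ((μ - μhat) ⬝ᵥ c) ^ 2 := by nlinarith
      have h3 : m ^ 2 / (2 * q) ≤ ((μ - μhat) ⬝ᵥ c) ^ 2 / (2 * q) :=
        (div_le_div_iff_of_pos_right (by linarith : (0:ℝ) < 2 * q)).mpr h2
      have h4 := hlow μ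
      linarith
    rw [hInf1, hInf2]
    rcases eq_or_lt_of_le hm with hm0 | hmpos
    · rw [← hm0, Real.sign_zero]
      ring
    · rw [Real.sign_of_pos hmpos]
      ring
  · -- case m < 0
    have hInf1 : sInf {v : ℝ | ∃ μ : Fin d → ℝ, μ ⬝ᵥ c ≤ -ε ∧
        v = (1 / 2) * ∑ s, (rs s - μ ⬝ᵥ as s) ^ 2}
        = (1 / 2) * ∑ s, (rs s - μhat ⬝ᵥ as s) ^ 2 := by
      refine IsLeast.csInf_eq ⟨⟨μhat, by rw [hμc]; linarith, rfl⟩, ?_⟩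
      rintro v ⟨μ, _, rfl⟩
      exact hFub μ
    have hInf2 : sInf {v : ℝ | ∃ μ : Fin d → ℝ, -ε ≤ μ ⬝ᵥ c ∧
        v = (1 / 2) * ∑ s, (rs s - μ ⬝ᵥ as s) ^ 2}
        = (1 / 2) * ∑ s, (rs s - μhat ⬝ᵥ as s) ^ 2 + m ^ 2 / (2 * q) := by
      refine IsLeast.csInf_eq ⟨⟨μstar, ge_of_eq hμstarc, hFμstar.symm⟩, ?_⟩
      rintro v ⟨μ, hμle, rfl⟩
      have h1 : -m ≤ (μ - μhat) ⬝ᵥ c := by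
        rw [sub_dotProduct, hμc]; linarith
      have h2 : m ^ 2 ≤ ((μ - μhat) ⬝ᵥ c) ^ 2 := by nlinarith
      have h3 : m ^ 2 / (2 * q) ≤ ((μ - μhat) ⬝ᵥ c) ^ 2 / (2 * q) :=
        (div_le_div_iff_of_pos_right (by linarith : (0:ℝ) < 2 * q)).mpr h2
      have h4 := hlow μ
      linarith
    rw [hInf1, hInf2, Real.sign_of_neg hm]
    ring
end

section
/- Define for distinct a, b ∈ 𝒜 the quantity Z_{a,b} = sgn(μ̂ᵀ(a−b)) · (μ̂ᵀ(a−b))² / (2 (a−b)ᵀ G⁻¹ (a−b)). Then for every â ∈ argmax_{a∈𝒜} μ̂ᵀa, one has max_{a ∈ 𝒜} min_{b ∈ 𝒜∖{a}} Z_{a,b} = min_{b ∈ 𝒜∖{â}} Z_{â,b}. -/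
open Matrix

/-- With `Z_{a,b} = sgn(μ̂ᵀ(a−b)) (μ̂ᵀ(a−b))² / (2(a−b)ᵀG⁻¹(a−b))`, for every
`â ∈ argmax_{a∈𝒜} μ̂ᵀa` one has `max_{a∈𝒜} min_{b∈𝒜∖{a}} Z_{a,b} = min_{b∈𝒜∖{â}} Z_{â,b}`. -/
theorem gllr_max_min_eq {d t : ℕ} (𝒜 : Finset (Fin d → ℝ)) (hcard : 2 ≤ 𝒜.card)
    (ht : 1 ≤ t) (as : Fin t → Fin d → ℝ) (rs : Fin t → ℝ)
    (G : Matrix (Fin d) (Fin d) ℝ) (hGdef : G = ∑ s, vecMulVec (as s) (as s))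
    (hG : G.PosDef)
    (μhat : Fin d → ℝ) (hμhat : μhat = G⁻¹.mulVec (∑ s, rs s • as s))
    (Z : (Fin d → ℝ) → (Fin d → ℝ) → ℝ)
    (hZ : ∀ a b, Z a b = Real.sign (μhat ⬝ᵥ (a - b)) * (μhat ⬝ᵥ (a - b)) ^ 2 /
      (2 * ((a - b) ⬝ᵥ G⁻¹.mulVec (a - b))))
    (ahat : Fin d → ℝ) (hahat : ahat ∈ 𝒜) (hmax : ∀ b ∈ 𝒜, μhat ⬝ᵥ b ≤ μhat ⬝ᵥ ahat) :
    sSup ((fun a => sInf (Z a '' ((𝒜 : Set (Fin d → ℝ)) \ {a}))) '' (𝒜 : Set (Fin d → ℝ)))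
      = sInf (Z ahat '' ((𝒜 : Set (Fin d → ℝ)) \ {ahat})) := by
  have hGinv : (G⁻¹).PosDef := hG.inv
  -- denominator positivity
  have hden : ∀ a b : Fin d → ℝ, a ≠ b → 0 < (a - b) ⬝ᵥ G⁻¹.mulVec (a - b) := by
    intro a b hab
    have hne : a - b ≠ 0 := sub_ne_zero.mpr hab
    have := hGinv.dotProduct_mulVec_pos hne
    simpa using this
  -- Z ahat b ≥ 0 for b ≠ ahat
  have hZnonneg : ∀ b, b ≠ ahat → b ∈ 𝒜 → 0 ≤ Z ahat b := by
    intro b hb hbA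
    rw [hZ]
    have hdot : 0 ≤ μhat ⬝ᵥ (ahat - b) := by
      have := hmax b hbA
      simp [dotProduct_sub]
      linarith
    have hd : 0 < 2 * ((ahat - b) ⬝ᵥ G⁻¹.mulVec (ahat - b)) := by
      have := hden ahat b (Ne.symm hb)
      linarith
    apply div_nonneg _ hd.le
    have hsgn : 0 ≤ Real.sign (μhat ⬝ᵥ (ahat - b)) := by
      rcases lt_or_eq_of_le hdot with h | h
      · rw [Real.sign_of_pos h]; norm_num
      · rw [← h, Real.sign_zero]
    positivity
  -- Z a ahat ≤ 0 for a ≠ ahat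
  have hZnonpos : ∀ a, a ≠ ahat → a ∈ 𝒜 → Z a ahat ≤ 0 := by
    intro a ha haA
    rw [hZ]
    have hdot : μhat ⬝ᵥ (a - ahat) ≤ 0 := by
      have := hmax a haA
      simp [dotProduct_sub]
      linarith
    have hd : 0 < 2 * ((a - ahat) ⬝ᵥ G⁻¹.mulVec (a - ahat)) := by
      have := hden a ahat ha
      linarith
    apply div_nonpos_of_nonpos_of_nonneg _ hd.le
    have hsgn : Real.sign (μhat ⬝ᵥ (a - ahat)) ≤ 0 := by
      rcases lt_or_eq_of_le hdot with h | h
      · rw [Real.sign_of_neg h]; norm_num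
      · rw [h, Real.sign_zero]
    have hsq : 0 ≤ (μhat ⬝ᵥ (a - ahat)) ^ 2 := sq_nonneg _
    exact mul_nonpos_of_nonpos_of_nonneg hsgn hsq
  -- basic set facts
  have hfin : ∀ a : Fin d → ℝ, (Z a '' ((𝒜 : Set (Fin d → ℝ)) \ {a})).Finite := by
    intro a
    exact ((𝒜.finite_toSet).diff).image _
  have hne : ∀ a ∈ 𝒜, (Z a '' ((𝒜 : Set (Fin d → ℝ)) \ {a})).Nonempty := by
    intro a ha
    obtain ⟨b, hbA, hb⟩ := 𝒜.exists_mem_ne (by omega) a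
    exact ⟨Z a b, ⟨b, ⟨hbA, hb⟩, rfl⟩⟩
  set RHS := sInf (Z ahat '' ((𝒜 : Set (Fin d → ℝ)) \ {ahat})) with hRHS
  have hRHSnonneg : 0 ≤ RHS := by
    apply le_csInf (hne ahat hahat)
    rintro x ⟨b, ⟨hbA, hb⟩, rfl⟩
    exact hZnonneg b hb hbA
  apply le_antisymm
  · apply csSup_le (Set.Nonempty.image _ ⟨ahat, hahat⟩)
    rintro x ⟨a, haA, rfl⟩
    by_cases ha : a = ahat
    · subst ha; exact le_refl _
    · have h1 : sInf (Z a '' ((𝒜 : Set (Fin d → ℝ)) \ {a})) ≤ Z a ahat := by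
        apply csInf_le (hfin a).bddBelow
        exact ⟨ahat, ⟨hahat, fun h => ha h.symm⟩, rfl⟩
      calc sInf (Z a '' ((𝒜 : Set (Fin d → ℝ)) \ {a})) ≤ Z a ahat := h1
        _ ≤ 0 := hZnonpos a ha haA
        _ ≤ RHS := hRHSnonneg
  · apply le_csSup (((𝒜.finite_toSet).image _).bddAbove)
    exact ⟨ahat, hahat, rfl⟩
end

section
/- (Confusing parameters on the sphere) Let μ, λ ∈ ℝ^d be nonzero and let ε > 0. If μᵀ( a*_μ − a*_λ ) > (1 + √(‖μ‖/‖λ‖))² ε, then the ε-optimal sets are disjoint: for every a ∈ S^{d−1} with μᵀ( a*_μ − a ) ≤ ε, one has λᵀ( a*_λ − a ) > ε. -/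
/-- For a nonzero vector `η`, the unique maximizer of `a ↦ ⟪η, a⟫` over the unit sphere. -/
noncomputable def sphereBestArm {d : ℕ} (η : EuclideanSpace ℝ (Fin d)) :
    EuclideanSpace ℝ (Fin d) :=
  ‖η‖⁻¹ • η

lemma sphereBestArm_norm {d : ℕ} (η : EuclideanSpace ℝ (Fin d)) (hη : η ≠ 0) :
    ‖sphereBestArm η‖ = 1 := by
  have h : 0 < ‖η‖ := norm_pos_iff.mpr hη
  rw [sphereBestArm, norm_smul, norm_inv, norm_norm]
  field_simp

lemma sphereBestArm_inner {d : ℕ} (η : EuclideanSpace ℝ (Fin d)) (hη : η ≠ 0)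
    (b : EuclideanSpace ℝ (Fin d)) (hb : ‖b‖ = 1) :
    (inner ℝ η (sphereBestArm η - b) : ℝ) = ‖η‖ / 2 * ‖sphereBestArm η - b‖ ^ 2 := by
  have h : 0 < ‖η‖ := norm_pos_iff.mpr hη
  have h1 : (inner ℝ η (sphereBestArm η) : ℝ) = ‖η‖ := by
    rw [sphereBestArm, real_inner_smul_right, real_inner_self_eq_norm_sq]
    field_simp
  have h2 : ‖sphereBestArm η - b‖ ^ 2 = 2 - 2 * (‖η‖⁻¹ * (inner ℝ η b : ℝ)) := by
    rw [norm_sub_sq_real, sphereBestArm_norm η hη, hb, sphereBestArm,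
      real_inner_smul_left]
    ring
  rw [inner_sub_right, h1, h2]
  field_simp

/-- (Confusing parameters on the sphere) If
`μᵀ(a*_μ − a*_λ) > (1 + √(‖μ‖/‖λ‖))² ε`, then the `ε`-optimal sets are disjoint:
for every unit vector `a` with `μᵀ(a*_μ − a) ≤ ε`, one has `λᵀ(a*_λ − a) > ε`. -/
theorem confusing_parameters_on_sphere {d : ℕ} (μ lam : EuclideanSpace ℝ (Fin d))
    (hμ : μ ≠ 0) (hlam : lam ≠ 0) (ε : ℝ) (hε : 0 < ε)
    (hconf : (1 + Real.sqrt (‖μ‖ / ‖lam‖)) ^ 2 * ε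
      < (inner ℝ μ (sphereBestArm μ - sphereBestArm lam) : ℝ)) :
    ∀ a : EuclideanSpace ℝ (Fin d), ‖a‖ = 1 →
      (inner ℝ μ (sphereBestArm μ - a) : ℝ) ≤ ε →
      ε < (inner ℝ lam (sphereBestArm lam - a) : ℝ) := by
  intro a ha hμa
  by_contra hle
  push_neg at hle
  have hm : 0 < ‖μ‖ := norm_pos_iff.mpr hμ
  have hl : 0 < ‖lam‖ := norm_pos_iff.mpr hlam
  set u := sphereBestArm μ with hu
  set v := sphereBestArm lam with hv
  have hv1 : ‖v‖ = 1 := sphereBestArm_norm lam hlam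
  rw [sphereBestArm_inner μ hμ a ha] at hμa
  rw [sphereBestArm_inner lam hlam a ha] at hle
  rw [sphereBestArm_inner μ hμ v hv1] at hconf
  set x := ‖u - a‖ with hx
  set y := ‖v - a‖ with hy
  set z := ‖u - v‖ with hz
  have hx0 : 0 ≤ x := norm_nonneg _
  have hy0 : 0 ≤ y := norm_nonneg _
  have hz0 : 0 ≤ z := norm_nonneg _
  have htri : z ≤ x + y := by
    calc z = ‖(u - a) + (a - v)‖ := by rw [hz, sub_add_sub_cancel]
    _ ≤ ‖u - a‖ + ‖a - v‖ := norm_add_le _ _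
    _ = x + y := by rw [norm_sub_rev a v]
  set s := Real.sqrt (‖μ‖ / ‖lam‖) with hs
  have hs0 : 0 ≤ s := Real.sqrt_nonneg _
  have hs2 : s ^ 2 = ‖μ‖ / ‖lam‖ := Real.sq_sqrt (by positivity)
  have hmeq : ‖μ‖ = s ^ 2 * ‖lam‖ := by
    field_simp at hs2
    linarith
  have hx2 : ‖μ‖ * x ^ 2 ≤ 2 * ε := by linarith
  have hy2 : ‖lam‖ * y ^ 2 ≤ 2 * ε := by linarith
  have hxy : ‖μ‖ * (x * y) ≤ 2 * s * ε := by
    have hsq : (‖μ‖ * (x * y)) ^ 2 ≤ (2 * s * ε) ^ 2 := by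
      have h1 : (‖μ‖ * (x * y)) ^ 2 = (‖μ‖ * x ^ 2) * (s ^ 2 * (‖lam‖ * y ^ 2)) := by
        rw [hmeq]; ring
      rw [h1]
      have h2 : s ^ 2 * (‖lam‖ * y ^ 2) ≤ s ^ 2 * (2 * ε) := by
        apply mul_le_mul_of_nonneg_left hy2 (by positivity)
      calc (‖μ‖ * x ^ 2) * (s ^ 2 * (‖lam‖ * y ^ 2))
          ≤ (2 * ε) * (s ^ 2 * (2 * ε)) := by
            apply mul_le_mul hx2 h2 (by positivity) (by positivity)
      _ = (2 * s * ε) ^ 2 := by ring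
    nlinarith [mul_nonneg (le_of_lt hm) (mul_nonneg hx0 hy0),
      mul_nonneg (mul_nonneg (by norm_num : (0:ℝ) ≤ 2) hs0) (le_of_lt hε)]
  have hzsq : ‖μ‖ * z ^ 2 ≤ ‖μ‖ * (x + y) ^ 2 :=
    mul_le_mul_of_nonneg_left (pow_le_pow_left₀ hz0 htri 2) (le_of_lt hm)
  have hfinal : ‖μ‖ * (x + y) ^ 2 ≤ 2 * (1 + s) ^ 2 * ε := by
    have : ‖μ‖ * (x + y) ^ 2 = ‖μ‖ * x ^ 2 + 2 * (‖μ‖ * (x * y)) + s ^ 2 * (‖lam‖ * y ^ 2) := by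
      rw [hmeq]; ring
    rw [this]
    have h2 : s ^ 2 * (‖lam‖ * y ^ 2) ≤ s ^ 2 * (2 * ε) :=
      mul_le_mul_of_nonneg_left hy2 (by positivity)
    have e1 : 2 * (1 + s) ^ 2 * ε = 2 * ε + 2 * (2 * s * ε) + s ^ 2 * (2 * ε) := by ring
    linarith
  have e2 : 2 * ((1 + s) ^ 2 * ε) = 2 * (1 + s) ^ 2 * ε := by ring
  linarith
end
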